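/- arXiv:0806.2411 — 6 statements merged into one kernel-verified Lean document; each statement's English description precedes it below -/
import Mathlib

section
/- Let p : (0,∞) → ℝ be C² with p′ < 0 and p″ > 0, let 0 < v₊ < v₋, a = −(v₊ − v₋)/(p(v₊) − p(v₋)), d > 0, and define φ(v) = v(v − v₋ + a(p(v) − p(v₋))) and the energy E(v,w) = w²/2 − (1/d)∫ᵥ^{v₋} φ(s)/s ds. Then: (i) E(v,w) ≥ 0 for all v ∈ [v₊, v₋] and w ∈ ℝ; and (ii) if (v,w) : I → (0,∞) × ℝ is a solution of the first-order system v′ = w, w′ = (1/d)·(w − φ(v))/v on an interval I, then for all x ∈ I, (d/dx) E(v(x), w(x)) = w(x)²/(d·v(x)), which is strictly positive wherever w(x) ≠ 0. -/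
open Filter Topology Set MeasureTheory intervalIntegral

/-- The energy `E(v,w) = w²/2 − (1/d)∫_v^{vm} φ(s)/s ds` is
nonnegative on `[vp, vm] × ℝ`, and along any solution of the first-order
profile system `v' = w`, `w' = (1/d)(w − φ(v))/v` on an interval `I` one has
`(d/dx) E(v(x), w(x)) = w(x)²/(d v(x))`, strictly positive wherever `w(x) ≠ 0`. -/
theorem energy_lyapunov
    (p p' p'' : ℝ → ℝ)
    (hp'd : ∀ v ∈ Ioi (0:ℝ), HasDerivAt p (p' v) v)
    (hp''d : ∀ v ∈ Ioi (0:ℝ), HasDerivAt p' (p'' v) v)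
    (hp''cont : ContinuousOn p'' (Ioi 0))
    (hp'neg : ∀ v ∈ Ioi (0:ℝ), p' v < 0)
    (hp''pos : ∀ v ∈ Ioi (0:ℝ), 0 < p'' v)
    (vp vm a d : ℝ)
    (hvp : 0 < vp) (hvlt : vp < vm) (hd : 0 < d)
    (ha : a = -(vp - vm) / (p vp - p vm))
    (φ : ℝ → ℝ)
    (hφ : ∀ v, φ v = v * (v - vm + a * (p v - p vm)))
    (E : ℝ → ℝ → ℝ)
    (hE : ∀ v w, E v w = w ^ 2 / 2 - (1 / d) * ∫ s in v..vm, φ s / s) :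
    (∀ v ∈ Icc vp vm, ∀ w : ℝ, 0 ≤ E v w) ∧
    (∀ I : Set ℝ, I.OrdConnected → ∀ V W : ℝ → ℝ,
      (∀ x ∈ I, 0 < V x) →
      (∀ x ∈ I, HasDerivAt V (W x) x) →
      (∀ x ∈ I, HasDerivAt W ((1 / d) * ((W x - φ (V x)) / V x)) x) →
      ∀ x ∈ I,
        HasDerivAt (fun y => E (V y) (W y)) ((W x) ^ 2 / (d * V x)) x ∧
        (W x ≠ 0 → 0 < (W x) ^ 2 / (d * V x))) := by
  have hvm : (0:ℝ) < vm := hvp.trans hvlt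
  set g : ℝ → ℝ := fun s => s - vm + a * (p s - p vm) with hg
  -- continuity facts
  have hpc : ContinuousOn p (Ioi 0) := fun x hx =>
    (hp'd x hx).continuousAt.continuousWithinAt
  have hgc : ContinuousOn g (Ioi 0) :=
    ((continuousOn_id.sub continuousOn_const).add
      (continuousOn_const.mul (hpc.sub continuousOn_const)))
  -- p is strictly decreasing on (0,∞)
  have hanti : StrictAntiOn p (Ioi 0) := by
    apply strictAntiOn_of_deriv_neg (convex_Ioi 0) hpc
    intro x hx
    rw [interior_Ioi] at hx
    rw [(hp'd x hx).deriv]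
    exact hp'neg x hx
  have hΔ : p vm < p vp := hanti (mem_Ioi.mpr hvp) (mem_Ioi.mpr hvm) hvlt
  have hΔ' : p vp - p vm ≠ 0 := by linarith
  have hapos : 0 < a := by
    rw [ha]
    apply div_pos (by linarith) (by linarith)
  -- g has derivative 1 + a p' on (0,∞)
  have hg'd : ∀ s ∈ Ioi (0:ℝ), HasDerivAt g (1 + a * p' s) s := by
    intro s hs
    exact ((hasDerivAt_id s).sub_const vm).add
      (((hp'd s hs).sub_const (p vm)).const_mul a)
  have hderiv : ∀ s ∈ Ioi (0:ℝ), deriv g s = 1 + a * p' s := fun s hs =>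
    (hg'd s hs).deriv
  -- deriv g has derivative a p'' on (0,∞)
  have hg''d : ∀ s ∈ Ioi (0:ℝ), HasDerivAt (deriv g) (a * p'' s) s := by
    intro s hs
    have h1 : HasDerivAt (fun t => 1 + a * p' t) (a * p'' s) s := by
      simpa using (((hp''d s hs).const_mul a).const_add 1)
    apply h1.congr_of_eventuallyEq
    filter_upwards [isOpen_Ioi.mem_nhds hs] with t ht
    exact hderiv t ht
  -- convexity of g on [vp, vm]
  have hsub : Icc vp vm ⊆ Ioi 0 := fun x hx => lt_of_lt_of_le hvp hx.1
  have hconv : ConvexOn ℝ (Icc vp vm) g := by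
    apply convexOn_of_deriv2_nonneg (convex_Icc vp vm) (hgc.mono hsub)
    · intro x hx
      rw [interior_Icc] at hx
      exact ((hg'd x (hsub (Ioo_subset_Icc_self hx))).differentiableAt).differentiableWithinAt
    · intro x hx
      rw [interior_Icc] at hx
      exact ((hg''d x (hsub (Ioo_subset_Icc_self hx))).differentiableAt).differentiableWithinAt
    · intro x hx
      rw [interior_Icc] at hx
      have hx0 : x ∈ Ioi (0:ℝ) := hsub (Ioo_subset_Icc_self hx)
      have : deriv (deriv g) x = a * p'' x := (hg''d x hx0).deriv
      simp only [Function.iterate_succ, Function.iterate_zero, Function.comp_apply, id_eq]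
      rw [this]
      exact le_of_lt (mul_pos hapos (hp''pos x hx0))
  -- g vanishes at the endpoints
  have hgvp : g vp = 0 := by
    simp only [hg, ha]
    field_simp
    ring
  have hgvm : g vm = 0 := by simp [hg]
  -- g ≤ 0 on [vp, vm]
  have hgle : ∀ v ∈ Icc vp vm, g v ≤ 0 := by
    intro v hv
    have := hconv.le_on_segment (left_mem_Icc.mpr hvlt.le) (right_mem_Icc.mpr hvlt.le)
      (by rwa [segment_eq_Icc hvlt.le])
    rwa [hgvp, hgvm, max_self] at this
  -- φ s / s = g s for s > 0
  have hφg : ∀ s : ℝ, s ∈ Ioi (0:ℝ) → φ s / s = g s := by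
    intro s hs
    rw [hφ]
    exact mul_div_cancel_left₀ _ (ne_of_gt hs)
  constructor
  · -- nonnegativity of E
    intro v hv w
    have hv0 : (0:ℝ) < v := lt_of_lt_of_le hvp hv.1
    have hIcc : Icc v vm ⊆ Icc vp vm := Icc_subset_Icc hv.1 le_rfl
    have heq : (∫ s in v..vm, φ s / s) = ∫ s in v..vm, g s := by
      apply intervalIntegral.integral_congr
      intro s hs
      rw [uIcc_of_le hv.2] at hs
      exact hφg s (hsub (hIcc hs))
    have hint : (∫ s in v..vm, g s) ≤ 0 := by
      have h0 : (0:ℝ) ≤ ∫ s in v..vm, -g s :=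
        intervalIntegral.integral_nonneg hv.2
          (fun u hu => neg_nonneg.mpr (hgle u (hIcc hu)))
      rw [intervalIntegral.integral_neg] at h0
      linarith
    rw [hE, heq]
    have h1 : (0:ℝ) ≤ w ^ 2 / 2 := by positivity
    have h2 : (1 / d) * (∫ s in v..vm, g s) ≤ 0 :=
      mul_nonpos_of_nonneg_of_nonpos (by positivity) hint
    linarith
  · -- derivative along solutions
    intro I _hI V W hVpos hVd hWd x hx
    have hVx : V x ∈ Ioi (0:ℝ) := mem_Ioi.mpr (hVpos x hx)
    have hVx0 : V x ≠ 0 := ne_of_gt (hVpos x hx)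
    set f : ℝ → ℝ := fun s => φ s / s with hf
    have hfc : ContinuousOn f (Ioi 0) := hgc.congr hφg
    have hfint : IntervalIntegrable f volume (V x) vm := by
      apply ContinuousOn.intervalIntegrable
      apply hfc.mono
      intro s hs
      rcases hs with ⟨h1, _⟩
      have : (0:ℝ) < min (V x) vm := lt_min (hVpos x hx) hvm
      exact mem_Ioi.mpr (lt_of_lt_of_le this h1)
    have hmeas : StronglyMeasurableAtFilter f (𝓝 (V x)) volume :=
      hfc.stronglyMeasurableAtFilter isOpen_Ioi (V x) hVx
    have hcont : ContinuousAt f (V x) :=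
      hfc.continuousAt (isOpen_Ioi.mem_nhds hVx)
    have hF : HasDerivAt (fun u => ∫ s in u..vm, f s) (-f (V x)) (V x) :=
      intervalIntegral.integral_hasDerivAt_left hfint hmeas hcont
    have hFc : HasDerivAt (fun y => ∫ s in V y..vm, f s) (-f (V x) * W x) x :=
      hF.comp x (hVd x hx)
    have hW2 : HasDerivAt (fun y => (W y) ^ 2 / 2)
        ((2 * W x ^ 1 * ((1 / d) * ((W x - φ (V x)) / V x))) / 2) x :=
      ((hWd x hx).pow 2).div_const 2
    have htot := hW2.sub (hFc.const_mul (1 / d))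
    have hfval : f (V x) = φ (V x) / V x := rfl
    have hDeq : (2 * W x ^ 1 * ((1 / d) * ((W x - φ (V x)) / V x))) / 2
        - (1 / d) * (-f (V x) * W x) = (W x) ^ 2 / (d * V x) := by
      rw [hfval]
      field_simp
      ring
    constructor
    · have : (fun y => E (V y) (W y))
          = fun y => (W y) ^ 2 / 2 - (1 / d) * ∫ s in V y..vm, f s := by
        funext y; rw [hE]
      rw [this]
      rw [← hDeq]
      exact htot
    · intro hw
      have h2 : 0 < (W x) ^ 2 :=
        lt_of_le_of_ne (sq_nonneg _) (Ne.symm (pow_ne_zero 2 hw))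
      exact div_pos h2 (mul_pos hd (hVpos x hx))
end

section
/- Let p : (0,∞) → ℝ be C² with p′ < 0 and p″ > 0, let 0 < v₊ < v₋, let a = −(v₊ − v₋)/(p(v₊) − p(v₋)), assume 1 + a p′(v₋) > 0, and set d_* = 1/(4 v₋²(1 + a p′(v₋))). If d > d_*, then no shock profile is monotone: every C² solution v̂ of v̂ − v₋ + a(p(v̂) − p(v₋)) = v̂′/v̂ − d v̂″ with v̂(−∞) = v₋, v̂(+∞) = v₊, v̂′(±∞) = 0 satisfies v̂′(x₀) > 0 for some x₀ ∈ ℝ (the profile oscillates about v₋ as x → −∞). -/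
set_option maxHeartbeats 1000000


open Filter Topology Set

/-- If `d > d_* = 1/(4 vm² (1 + a p'(vm)))`, then no shock
profile of Slemrod's model is monotone: every profile satisfies `vhat'(x₀) > 0` for some `x₀`. -/
theorem nonmonotone_above_dstar
    (p p' p'' : ℝ → ℝ)
    (hp'd : ∀ v ∈ Ioi (0:ℝ), HasDerivAt p (p' v) v)
    (hp''d : ∀ v ∈ Ioi (0:ℝ), HasDerivAt p' (p'' v) v)
    (hp''cont : ContinuousOn p'' (Ioi 0))
    (hp'neg : ∀ v ∈ Ioi (0:ℝ), p' v < 0)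
    (hp''pos : ∀ v ∈ Ioi (0:ℝ), 0 < p'' v)
    (vp vm a d : ℝ)
    (hvp : 0 < vp) (hvlt : vp < vm)
    (ha : a = -(vp - vm) / (p vp - p vm))
    (hb : 0 < 1 + a * p' vm)
    (dstar : ℝ) (hdstar : dstar = 1 / (4 * vm ^ 2 * (1 + a * p' vm)))
    (hdgt : dstar < d)
    (vhat vhat' vhat'' : ℝ → ℝ)
    (hpos : ∀ x, 0 < vhat x)
    (hder1 : ∀ x, HasDerivAt vhat (vhat' x) x)
    (hder2 : ∀ x, HasDerivAt vhat' (vhat'' x) x)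
    (hprof : ∀ x, vhat x - vm + a * (p (vhat x) - p vm) = vhat' x / vhat x - d * vhat'' x)
    (hlim_m : Tendsto vhat atBot (𝓝 vm))
    (hlim_p : Tendsto vhat atTop (𝓝 vp))
    (hlimd_m : Tendsto vhat' atBot (𝓝 0))
    (hlimd_p : Tendsto vhat' atTop (𝓝 0)) :
    ∃ x₀, 0 < vhat' x₀ := by
  by_contra hcon
  push_neg at hcon
  have hvm : (0:ℝ) < vm := hvp.trans hvlt
  have hd0 : (0:ℝ) < d := lt_trans (by rw [hdstar]; positivity) hdgt
  have hdiff : Differentiable ℝ vhat := fun x => (hder1 x).differentiableAt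
  have hmono : Antitone vhat :=
    antitone_of_deriv_nonpos hdiff fun x => by rw [(hder1 x).deriv]; exact hcon x
  have hub : ∀ x, vhat x ≤ vm := fun x =>
    ge_of_tendsto hlim_m ((eventually_le_atBot x).mono fun y hy => hmono hy)
  have hlb : ∀ x, vp ≤ vhat x := fun x =>
    le_of_tendsto hlim_p ((eventually_ge_atTop x).mono fun y hy => hmono hy)
  set g : ℝ → ℝ := fun v => v - vm + a * (p v - p vm) with hgdef
  have hprof' : ∀ x, g (vhat x) = vhat' x / vhat x - d * vhat'' x := hprof
  have hgvm : g vm = 0 := by simp [hgdef]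
  -- a Lipschitz-type bound for g on [vp, vm]
  have hIcc : Icc vp vm ⊆ Ioi (0:ℝ) := fun v hv => lt_of_lt_of_le hvp hv.1
  have hp'cont : ContinuousOn p' (Ioi 0) := fun v hv =>
    (hp''d v hv).continuousAt.continuousWithinAt
  obtain ⟨C, hC⟩ := (isCompact_Icc (a := vp) (b := vm)).exists_bound_of_continuousOn
    (f := fun v => 1 + a * p' v)
    (continuousOn_const.add (continuousOn_const.mul (hp'cont.mono hIcc)))
  set C' : ℝ := max C 0 with hC'def
  have hC'0 : 0 ≤ C' := le_max_right _ _
  have hgd : ∀ v ∈ Icc vp vm, HasDerivWithinAt g (1 + a * p' v) (Icc vp vm) v := by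
    intro v hv
    have h1 := (hp'd v (hIcc hv)).hasDerivWithinAt (s := Icc vp vm)
    exact ((hasDerivWithinAt_id v _).sub_const vm).add ((h1.sub_const (p vm)).const_mul a)
  have hLip : ∀ v ∈ Icc vp vm, |g v| ≤ C' * |v - vm| := by
    intro v hv
    have := (convex_Icc vp vm).norm_image_sub_le_of_norm_hasDerivWithin_le (C := C') hgd
      (fun u hu => le_trans (hC u hu) (le_max_left _ _))
      ⟨le_of_lt hvlt, le_refl vm⟩ hv
    simpa [hgvm, Real.norm_eq_abs] using this
  -- strict upper bound vhat < vm via a Grönwall argument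
  have hlt : ∀ x, vhat x < vm := by
    by_contra hc
    push_neg at hc
    obtain ⟨x₂, hx₂⟩ := hc
    have he : vhat x₂ = vm := le_antisymm (hub x₂) hx₂
    have hmax : IsLocalMax vhat x₂ :=
      Eventually.of_forall fun y => (hub y).trans_eq he.symm
    have hd'0 : vhat' x₂ = 0 := hmax.hasDerivAt_eq_zero (hder1 x₂)
    have hdiff' : Differentiable ℝ vhat' := fun x => (hder2 x).differentiableAt
    set K : ℝ := 1 + (1/d) * (1/vp + C') with hKdef
    have heq : ∀ x, x₂ ≤ x → vhat x = vm := by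
      intro b hbb
      have hgron := norm_le_gronwallBound_of_norm_deriv_right_le
        (f := fun x => (vhat x - vm, vhat' x)) (f' := fun x => (vhat' x, vhat'' x))
        (δ := 0) (K := K) (ε := 0) (a := x₂) (b := b)
        (((hdiff.continuous.sub continuous_const).prodMk
          hdiff'.continuous).continuousOn)
        (fun x _ => (((hder1 x).sub_const vm).prodMk (hder2 x)).hasDerivWithinAt)
        (by simp [he, hd'0])
        ?_
      · have := hgron b ⟨hbb, le_refl b⟩
        rw [gronwallBound_ε0_δ0] at this
        have h0 : (vhat b - vm, vhat' b) = 0 := norm_le_zero_iff.mp this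
        rw [Prod.mk_eq_zero] at h0
        linarith [h0.1]
      · intro x _
        have hvx := hpos x
        have hvx' : vp ≤ vhat x := hlb x
        have hIx : vhat x ∈ Icc vp vm := ⟨hlb x, hub x⟩
        have hdd : vhat'' x = (vhat' x / vhat x - g (vhat x)) / d := by
          rw [hprof' x]
          have he' : vhat' x / vhat x - (vhat' x / vhat x - d * vhat'' x) = d * vhat'' x := by
            ring
          rw [he', mul_div_cancel_left₀ _ (ne_of_gt hd0)]
        have h1 : |vhat' x / vhat x| ≤ (1/vp) * |vhat' x| := by
          rw [abs_div, abs_of_pos hvx, one_div, inv_mul_eq_div]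
          exact div_le_div_of_nonneg_left (abs_nonneg _) hvp hvx'
        have h2 : |g (vhat x)| ≤ C' * |vhat x - vm| := hLip _ hIx
        have hN : ∀ y : ℝ × ℝ, ‖y‖ = max |y.1| |y.2| := fun y => rfl
        rw [hN, hN]
        simp only
        set N : ℝ := max |vhat x - vm| |vhat' x| with hNdef
        have hN0 : 0 ≤ N := le_trans (abs_nonneg _) (le_max_left _ _)
        have hN1 : |vhat x - vm| ≤ N := le_max_left _ _
        have hN2 : |vhat' x| ≤ N := le_max_right _ _
        have hK1 : (1:ℝ) ≤ K := by
          rw [hKdef]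
          have : 0 ≤ (1/d) * (1/vp + C') := by positivity
          linarith
        have hb1 : |vhat' x| ≤ K * N + 0 := by nlinarith
        have hb2 : |vhat'' x| ≤ K * N + 0 := by
          rw [hdd, abs_div, abs_of_pos hd0, div_le_iff₀ hd0]
          have h3 : |vhat' x / vhat x - g (vhat x)| ≤ (1/vp) * |vhat' x| + C' * |vhat x - vm| :=
            le_trans (abs_sub _ _) (add_le_add h1 h2)
          have h4 : (1/vp) * |vhat' x| + C' * |vhat x - vm| ≤ (1/vp + C') * N := by
            have := mul_le_mul_of_nonneg_left hN2 (le_of_lt (one_div_pos.mpr hvp))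
            have := mul_le_mul_of_nonneg_left hN1 hC'0
            nlinarith
          have h5 : (1/vp + C') * N ≤ (K * N + 0) * d := by
            have hKd : K * d = d + (1/vp + C') := by
              rw [hKdef]; field_simp
            have hKdN : (K*d)*N = (d + (1/vp + C'))*N := by rw [hKd]
            nlinarith [hKdN, mul_nonneg (le_of_lt hd0) hN0]
          linarith [le_trans h3 h4]
        exact max_le hb1 hb2
    have : Tendsto vhat atTop (𝓝 vm) := by
      refine Tendsto.congr' ?_ (tendsto_const_nhds (α := ℝ) (x := vm))
      filter_upwards [eventually_ge_atTop x₂] with x hx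
      exact (heq x hx).symm
    exact absurd (tendsto_nhds_unique hlim_p this) (ne_of_lt hvlt)
  -- basic quantities
  have hune : ∀ x, vhat x - vm ≠ 0 := fun x => sub_ne_zero.mpr (hlt x).ne
  set b0 : ℝ := 1 + a * p' vm with hb0def
  have hdstar' : 1 / (4 * vm ^ 2 * b0) < d := by rw [← hdstar]; exact hdgt
  have hm0pos : 0 < b0 - 1/(4*d*vm^2) := by
    rw [sub_pos, div_lt_iff₀ (by positivity)]
    rw [div_lt_iff₀ (by positivity)] at hdstar'
    nlinarith [hdstar']
  set m0 : ℝ := b0 - 1/(4*d*vm^2) with hm0def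
  -- slope limit
  have hgderiv : HasDerivAt g b0 vm := by
    have h1 := hp'd vm (mem_Ioi.mpr hvm)
    exact ((hasDerivAt_id vm).sub_const vm).add ((h1.sub_const (p vm)).const_mul a)
  clear_value g b0
  have hslope : Tendsto (fun x => g (vhat x) / (vhat x - vm)) atBot (𝓝 b0) := by
    have h1 := hasDerivAt_iff_tendsto_slope.mp hgderiv
    have h2 : Tendsto vhat atBot (𝓝[≠] vm) :=
      tendsto_nhdsWithin_of_tendsto_nhds_of_eventually_within _ hlim_m
        (Eventually.of_forall fun x => (hlt x).ne)
    refine (h1.comp h2).congr fun x => ?_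
    show slope g vm (vhat x) = _
    rw [slope_def_field, hgvm, sub_zero]
  have h4t : Tendsto (fun x => 1/(4*d*(vhat x)^2)) atBot (𝓝 (1/(4*d*vm^2))) := by
    have hden : Tendsto (fun x => 4*d*(vhat x)^2) atBot (𝓝 (4*d*vm^2)) :=
      (hlim_m.pow 2).const_mul (4*d)
    exact tendsto_const_nhds.div hden (by positivity)
  have hkey_ev : ∀ᶠ x in atBot,
      m0/2 < g (vhat x) / (vhat x - vm) - 1/(4*d*(vhat x)^2) :=
    (hslope.sub h4t).eventually (eventually_gt_nhds (half_lt_self hm0pos))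
  obtain ⟨x₁, hx₁⟩ := eventually_atBot.mp hkey_ev
  clear_value m0
  -- Riccati variable
  set r : ℝ → ℝ := fun x => vhat' x / (vhat x - vm) with hrdef
  set ρ : ℝ → ℝ := fun x =>
    (vhat'' x * (vhat x - vm) - vhat' x * vhat' x) / (vhat x - vm)^2 with hρdef
  have hrderiv : ∀ x, HasDerivAt r (ρ x) x := fun x =>
    (hder2 x).div ((hder1 x).sub_const vm) (hune x)
  clear_value r ρ
  have hrnn : ∀ x, 0 ≤ r x := fun x => by
    rw [hrdef]
    simp only
    rw [div_nonneg_iff]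
    right
    exact ⟨hcon x, by linarith [hlt x]⟩
  set c : ℝ := m0/(2*d) with hcdef
  have hc0 : 0 < c := by rw [hcdef]; positivity
  have hcd : 2*d*c = m0 := by rw [hcdef]; field_simp
  clear_value c
  -- the identity from the profile equation
  have hGv : ∀ x, g (vhat x) * vhat x = vhat' x - d * vhat'' x * vhat x := by
    intro x
    have h2 : vhat x ≠ 0 := ne_of_gt (hpos x)
    have h'' := congrArg (fun t => t * vhat x) (hprof' x)
    simp only [sub_mul] at h''
    rw [div_mul_cancel₀ _ h2] at h''
    exact h''
  -- derivative bound on (-∞, x₁]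
  have hρle : ∀ x ≤ x₁, ρ x ≤ -c := by
    intro x hx
    have hu : vhat x - vm < 0 := by linarith [hlt x]
    have hu2 : 0 < (vhat x - vm)^2 := by nlinarith
    have hv0 : 0 < vhat x := hpos x
    have hkey := hx₁ x hx
    have h1 : vhat x - vm ≠ 0 := hune x
    have h2 : vhat x ≠ 0 := ne_of_gt hv0
    have h3 : d ≠ 0 := ne_of_gt hd0
    have h4 : 0 < 4*d^2*(vhat x)^2 := by positivity
    have h4' : 0 < 4*d*(vhat x)^2 := by positivity
    have hGq : 2*d*m0*(vhat x)^2*(vhat x - vm)^2 + (vhat x - vm)^2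
        < 4*d*(vhat x)^2*(g (vhat x))*(vhat x - vm) := by
      have h := mul_lt_mul_of_pos_right hkey (mul_pos h4' hu2)
      have e2 : (g (vhat x)/(vhat x - vm) - 1/(4*d*(vhat x)^2)) * (4*d*(vhat x)^2*(vhat x - vm)^2)
          = 4*d*(vhat x)^2*(g (vhat x))*(vhat x - vm) - (vhat x - vm)^2 := by
        field_simp
      rw [e2] at h
      nlinarith [h]
    have hsq : 4*d*(vhat x)*(vhat' x)*(vhat x - vm)
        ≤ 4*d^2*(vhat x)^2*(vhat' x)^2 + (vhat x - vm)^2 := by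
      nlinarith [sq_nonneg (2*d*(vhat x)*(vhat' x) - (vhat x - vm))]
    have e1' : 4*d^2*(vhat x)^2*(vhat'' x)*(vhat x - vm)
        = 4*d*(vhat x)*(vhat' x)*(vhat x - vm)
          - 4*d*(vhat x)^2*(g (vhat x))*(vhat x - vm) := by
      linear_combination ((4:ℝ)*d*(vhat x)*(vhat x - vm)) * hGv x
    have e5 : 4*d^2*(vhat x)^2*(c*(vhat x - vm)^2)
        = 2*d*m0*(vhat x)^2*(vhat x - vm)^2 := by
      linear_combination (2*d*(vhat x)^2*(vhat x - vm)^2) * hcd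
    rw [hρdef]
    simp only
    rw [div_le_iff₀ hu2, ← mul_le_mul_iff_right₀ h4]
    linarith [e1', e5, hGq, hsq]
  -- r + c x is antitone on Iic x₁
  have hFanti : AntitoneOn (fun x => r x + c * x) (Iic x₁) := by
    apply antitoneOn_of_deriv_nonpos (convex_Iic x₁)
    · exact Continuous.continuousOn (by
        have : Continuous r := by
          have : Differentiable ℝ r := fun x => (hrderiv x).differentiableAt
          exact this.continuous
        continuity)
    · intro x _
      exact (((hrderiv x).add ((hasDerivAt_id x).const_mul c)).differentiableAt).differentiableWithinAt
    · intro x hx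
      rw [interior_Iic] at hx
      have hdF : HasDerivAt (fun x => r x + c * x) (ρ x + c * 1) x :=
        (hrderiv x).add ((hasDerivAt_id x).const_mul c)
      rw [hdF.deriv]
      have := hρle x (le_of_lt hx)
      linarith
  have hRstep : ∀ x y, x ≤ y → y ≤ x₁ → r y + c*y ≤ r x + c*x := fun x y hxy hy =>
    hFanti (le_trans hxy hy) hy hxy
  set R0 : ℝ := 2/(d*vp) with hR0def
  have hR0pos : 0 < R0 := by rw [hR0def]; positivity
  have hR0eq : d*vp*R0 = 2 := by
    rw [hR0def]; field_simp
  clear_value R0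
  set x₂ : ℝ := x₁ - (R0 + 1)/c with hx₂def
  have hx₂le : x₂ ≤ x₁ := by
    rw [hx₂def]
    have : 0 < (R0 + 1)/c := by positivity
    linarith
  clear_value x₂
  have hrge : ∀ x ≤ x₂, R0 + 1 ≤ r x := by
    intro x hx
    have h1 := hRstep x₂ x₁ hx₂le le_rfl
    have h2 := hRstep x x₂ hx hx₂le
    have h3 : c*(x₁ - x₂) = R0 + 1 := by
      rw [hx₂def]
      field_simp
      ring
    have h0 := hrnn x₁
    have h5 : 0 ≤ c*(x₂ - x) := mul_nonneg hc0.le (by linarith)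
    nlinarith [h1, h2, h3, h0, h5]
  -- sharpened derivative bound on (-∞, x₂]
  have hρle2 : ∀ x ≤ x₂, ρ x ≤ -(r x)^2/2 := by
    intro x hx
    have hxx₁ : x ≤ x₁ := hx.trans hx₂le
    have hu : vhat x - vm < 0 := by linarith [hlt x]
    have hu2 : 0 < (vhat x - vm)^2 := by nlinarith
    have hv0 : 0 < vhat x := hpos x
    have hvlb := hlb x
    have hrx := hrge x hx
    have h1 : vhat x - vm ≠ 0 := hune x
    have h2 : vhat x ≠ 0 := ne_of_gt hv0
    have hkey := hx₁ x hxx₁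
    have hGu : 0 < g (vhat x) * (vhat x - vm) := by
      have hq : 0 < g (vhat x) / (vhat x - vm) := by
        have hp2 : 0 < 1/(4*d*(vhat x)^2) := by positivity
        linarith [half_pos hm0pos]
      have hmul := mul_pos hq hu2
      have e : g (vhat x)/(vhat x - vm)*(vhat x - vm)^2 = g (vhat x)*(vhat x - vm) := by
        field_simp
      linarith [e ▸ hmul]
    have hw : vhat' x = r x * (vhat x - vm) := by
      rw [hrdef]
      simp only
      field_simp
    have hdvr : 2 < d*(vhat x)*(r x) := by
      have t1 : 0 < d * vp := mul_pos hd0 hvp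
      have t2 : 0 ≤ (d*vp) * (r x - (R0+1)) := mul_nonneg t1.le (by linarith)
      have t3 : 0 ≤ d * ((vhat x - vp) * r x) :=
        mul_nonneg hd0.le (mul_nonneg (by linarith) (hrnn x))
      nlinarith [hR0eq, t1, t2, t3]
    have e1 : d*(vhat x)*(vhat'' x)*(vhat x - vm)
        = r x*(vhat x - vm)^2 - g (vhat x)*(vhat x - vm)*(vhat x) := by
      linear_combination (vhat x - vm) * hGv x + (vhat x - vm) * hw
    have e2 : vhat' x * vhat' x = (r x)^2*(vhat x - vm)^2 := by rw [hw]; ring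
    have e3 : 0 ≤ r x*(vhat x - vm)^2*(d*(vhat x)*(r x) - 2) :=
      mul_nonneg (mul_nonneg (hrnn x) (sq_nonneg _)) (by linarith)
    have e4 : 0 < g (vhat x)*(vhat x - vm)*(vhat x) := mul_pos hGu hv0
    have hdv : 0 < d * vhat x := mul_pos hd0 hv0
    have e2' : d*(vhat x)*(vhat' x * vhat' x) = d*(vhat x)*((r x)^2*(vhat x - vm)^2) :=
      congrArg (fun t => d*(vhat x)*t) e2
    rw [hρdef]
    simp only
    rw [div_le_iff₀ hu2, ← mul_le_mul_iff_right₀ hdv]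
    linarith [e1, e2', e3, e4]
  -- final contradiction via 1/r
  have hrpos : ∀ x ≤ x₂, 0 < r x := fun x hx => lt_of_lt_of_le (by linarith) (hrge x hx)
  have hsd : ∀ x ≤ x₂, HasDerivAt (fun y => (r y)⁻¹ - y/2) (-(ρ x)/(r x)^2 - 1/2) x := by
    intro x hx
    have h1 := (hrderiv x).inv (ne_of_gt (hrpos x hx))
    have h2 : HasDerivAt (fun y : ℝ => y/2) (1/2) x := by
      simpa using (hasDerivAt_id x).div_const 2
    exact h1.sub h2
  have hmonoS : MonotoneOn (fun y => (r y)⁻¹ - y/2) (Iic x₂) := by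
    apply monotoneOn_of_deriv_nonneg (convex_Iic x₂)
    · intro x hx
      exact (hsd x hx).continuousAt.continuousWithinAt
    · intro x hx
      rw [interior_Iic] at hx
      exact (hsd x (le_of_lt hx)).differentiableAt.differentiableWithinAt
    · intro x hx
      rw [interior_Iic] at hx
      rw [(hsd x (le_of_lt hx)).deriv]
      have hrp := hrpos x (le_of_lt hx)
      have hr2 : 0 < (r x)^2 := by positivity
      have hρ := hρle2 x (le_of_lt hx)
      have : (r x)^2/2 ≤ -(ρ x) := by linarith
      have h6 : ((r x)^2/2)/(r x)^2 ≤ -(ρ x)/(r x)^2 := (div_le_div_iff_of_pos_right hr2).mpr this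
      have h7 : ((r x)^2/2)/(r x)^2 = 1/2 := by field_simp [hrp.ne']
      rw [h7] at h6
      linarith
  -- evaluate monotonicity at a far-left point
  set x₃ : ℝ := x₂ - 2*(r x₂)⁻¹ - 2 with hx₃def
  have hx₃le : x₃ ≤ x₂ := by
    have : 0 < (r x₂)⁻¹ := inv_pos.mpr (hrpos x₂ le_rfl)
    rw [hx₃def]; linarith
  clear_value x₃
  have hmle := hmonoS (mem_Iic.mpr hx₃le) (mem_Iic.mpr (le_refl x₂)) hx₃le
  have hinv3 : 0 < (r x₃)⁻¹ := inv_pos.mpr (hrpos x₃ hx₃le)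
  have : (r x₃)⁻¹ - x₃/2 ≤ (r x₂)⁻¹ - x₂/2 := hmle
  rw [hx₃def] at this
  linarith
end

section
/- Let v̂ be a shock profile, let λ ∈ ℝ with λ ≥ 0, and let (u, v) be a solution of the integrated eigenvalue system λv + v′ − u′ = 0, λu + u′ − f(v̂)v′ = u″/v̂ − d v‴ (with f(v̂) = −a p′(v̂) − v̂′/v̂², u of class C², v of class C³, and u, u′, u″, v, v′, v″, v‴ square-integrable and tending to 0 at ±∞). Then the integral identity λ ∫_ℝ (2 − v̂′/(2v̂²)) |v|² dx − (a/2) ∫_ℝ p″(v̂) v̂′ |v|² dx + ∫_ℝ |v′|²/v̂ dx = 0 holds. -/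
open Filter Topology Set MeasureTheory

lemma aux_norm_sq (z : ℂ) : ‖z‖^2 = z.re^2 + z.im^2 := by
  rw [Complex.sq_norm, Complex.normSq_apply]; ring

lemma aux_bounded (g : ℝ → ℝ) (hg : Continuous g) {L L' : ℝ}
    (ht : Tendsto g atTop (𝓝 L)) (hb : Tendsto g atBot (𝓝 L')) :
    ∃ C, ∀ x, |g x| ≤ C := by
  obtain ⟨b, hbp⟩ := eventually_atTop.1 (ht.eventually (eventually_le_nhds (lt_add_one L)))
  obtain ⟨b2, hb2⟩ := eventually_atTop.1 (ht.eventually (eventually_ge_nhds (by linarith : L - 1 < L)))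
  obtain ⟨c, hcp⟩ := eventually_atBot.1 (hb.eventually (eventually_le_nhds (lt_add_one L')))
  obtain ⟨c2, hc2⟩ := eventually_atBot.1 (hb.eventually (eventually_ge_nhds (by linarith : L' - 1 < L')))
  obtain ⟨C, hC⟩ := (isCompact_Icc (a := min c c2) (b := max b b2)).exists_bound_of_continuousOn
    hg.continuousOn
  refine ⟨max C (max (|L| + 1) (|L'| + 1)), fun x => ?_⟩
  rcases le_total x (min c c2) with h | h
  · have h1 := hcp x (h.trans (min_le_left _ _))
    have h2 := hc2 x (h.trans (min_le_right _ _))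
    have : |g x| ≤ |L'| + 1 := abs_le.2 ⟨by cases abs_cases L' <;> linarith, by cases abs_cases L' <;> linarith⟩
    exact this.trans (le_max_of_le_right (le_max_right _ _))
  rcases le_total (max b b2) x with h' | h'
  · have h1 := hbp x ((le_max_left _ _).trans h')
    have h2 := hb2 x ((le_max_right _ _).trans h')
    have : |g x| ≤ |L| + 1 := abs_le.2 ⟨by cases abs_cases L <;> linarith, by cases abs_cases L <;> linarith⟩
    exact this.trans (le_max_of_le_right (le_max_left _ _))
  · exact le_max_of_le_left (by simpa using hC x ⟨h, h'⟩)

lemma aux_lower (g : ℝ → ℝ) (hg : Continuous g) {L L' : ℝ} (hL : 0 < L) (hL' : 0 < L')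
    (hpos : ∀ x, 0 < g x)
    (ht : Tendsto g atTop (𝓝 L)) (hb : Tendsto g atBot (𝓝 L')) :
    ∃ m, 0 < m ∧ ∀ x, m ≤ g x := by
  obtain ⟨b, hbp⟩ := eventually_atTop.1 (ht.eventually (eventually_ge_nhds (by linarith : L/2 < L)))
  obtain ⟨c, hcp⟩ := eventually_atBot.1 (hb.eventually (eventually_ge_nhds (by linarith : L'/2 < L')))
  rcases le_total b c with hbc | hbc
  · refine ⟨min (L/2) (L'/2), by positivity, fun x => ?_⟩
    rcases le_total x c with h | h
    · exact (min_le_right _ _).trans (hcp x h)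
    · exact (min_le_left _ _).trans (hbp x (hbc.trans h))
  · obtain ⟨x₀, hx₀, hmin⟩ := (isCompact_Icc (a := c) (b := b)).exists_isMinOn
      (nonempty_Icc.2 hbc) hg.continuousOn
    refine ⟨min (min (L/2) (L'/2)) (g x₀), lt_min (by positivity) (hpos x₀), fun x => ?_⟩
    rcases le_total x c with h | h
    · exact ((min_le_left _ _).trans (min_le_right _ _)).trans (hcp x h)
    rcases le_total b x with h' | h'
    · exact ((min_le_left _ _).trans (min_le_left _ _)).trans (hbp x h')
    · exact (min_le_right _ _).trans (hmin ⟨h, h'⟩)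

noncomputable def auxG (a d lam : ℝ) (P w : ℝ → ℝ) (u v v' v'' : ℝ → ℂ) (x : ℝ) : ℝ :=
  (1/2) * ((u x).re * (u x).re + (u x).im * (u x).im)
  - ((u x).re * (v x).re + (u x).im * (v x).im)
  + ((v x).re * (v x).re + (v x).im * (v x).im)
  + a/2 * P x * ((v x).re * (v x).re + (v x).im * (v x).im)
  - lam/2 * (((v x).re * (v x).re + (v x).im * (v x).im) / w x)
  - ((v' x).re * (v x).re + (v' x).im * (v x).im) / w x
  + d * ((v'' x).re * (v x).re + (v'' x).im * (v x).im)
  - d/2 * ((v' x).re * (v' x).re + (v' x).im * (v' x).im)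

lemma auxG_hasDerivAt (a d lam : ℝ) (P P' w w' : ℝ → ℝ)
    (u u' u'' v v' v'' v''' : ℝ → ℂ) (x : ℝ) (hw : w x ≠ 0)
    (hP : HasDerivAt P (P' x) x) (hwd : HasDerivAt w (w' x) x)
    (hud1 : HasDerivAt u (u' x) x)
    (hvd1 : HasDerivAt v (v' x) x) (hvd2 : HasDerivAt v' (v'' x) x)
    (hvd3 : HasDerivAt v'' (v''' x) x)
    (he1 : (lam : ℂ) * v x + v' x - u' x = 0)
    (hu2 : u'' x = (lam : ℂ) * v' x + v'' x)
    (he2 : (lam : ℂ) * u x + u' x - ((-a * P x - w' x / (w x) ^ 2 : ℝ) : ℂ) * v' x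
      = u'' x / ((w x : ℝ) : ℂ) - (d : ℂ) * v''' x) :
    HasDerivAt (auxG a d lam P w u v v' v'')
      (-(lam * ((2 - w' x / (2 * (w x) ^ 2)) * ‖v x‖ ^ 2)
        - a / 2 * (P' x * ‖v x‖ ^ 2) + ‖v' x‖ ^ 2 / w x)) x := by
  have hru : HasDerivAt (fun y => (u y).re) ((u' x).re) x :=
    Complex.reCLM.hasFDerivAt.comp_hasDerivAt x hud1
  have hiu : HasDerivAt (fun y => (u y).im) ((u' x).im) x :=
    Complex.imCLM.hasFDerivAt.comp_hasDerivAt x hud1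
  have hrv : HasDerivAt (fun y => (v y).re) ((v' x).re) x :=
    Complex.reCLM.hasFDerivAt.comp_hasDerivAt x hvd1
  have hiv : HasDerivAt (fun y => (v y).im) ((v' x).im) x :=
    Complex.imCLM.hasFDerivAt.comp_hasDerivAt x hvd1
  have hrv' : HasDerivAt (fun y => (v' y).re) ((v'' x).re) x :=
    Complex.reCLM.hasFDerivAt.comp_hasDerivAt x hvd2
  have hiv' : HasDerivAt (fun y => (v' y).im) ((v'' x).im) x :=
    Complex.imCLM.hasFDerivAt.comp_hasDerivAt x hvd2
  have hrv'' : HasDerivAt (fun y => (v'' y).re) ((v''' x).re) x :=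
    Complex.reCLM.hasFDerivAt.comp_hasDerivAt x hvd3
  have hiv'' : HasDerivAt (fun y => (v'' y).im) ((v''' x).im) x :=
    Complex.imCLM.hasFDerivAt.comp_hasDerivAt x hvd3
  have t1 := ((hru.mul hru).add (hiu.mul hiu)).const_mul (1/2 : ℝ)
  have t2 := (hru.mul hrv).add (hiu.mul hiv)
  have hnv := (hrv.mul hrv).add (hiv.mul hiv)
  have t4 := (hP.const_mul (a/2)).mul hnv
  have t5 := (hnv.div hwd hw).const_mul (lam/2)
  have t6 := ((hrv'.mul hrv).add (hiv'.mul hiv)).div hwd hw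
  have t7 := ((hrv''.mul hrv).add (hiv''.mul hiv)).const_mul d
  have t8 := ((hrv'.mul hrv').add (hiv'.mul hiv')).const_mul (d/2)
  have H := ((((((t1.sub t2).add hnv).add t4).sub t5).sub t6).add t7).sub t8
  refine H.congr_deriv ?_
  symm
  have e1r := congrArg Complex.re he1
  have e1i := congrArg Complex.im he1
  have e2r := congrArg Complex.re he2
  have e2i := congrArg Complex.im he2
  have hu2r := congrArg Complex.re hu2
  have hu2i := congrArg Complex.im hu2
  simp only [Complex.add_re, Complex.sub_re, Complex.add_im, Complex.sub_im,
    Complex.re_ofReal_mul, Complex.im_ofReal_mul, Complex.div_ofReal_re, Complex.div_ofReal_im,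
    Complex.zero_re, Complex.zero_im] at e1r e1i e2r e2i hu2r hu2i
  rw [hu2r] at e2r
  rw [hu2i] at e2i
  have hu'r : (u' x).re = lam * (v x).re + (v' x).re := by linarith
  have hu'i : (u' x).im = lam * (v x).im + (v' x).im := by linarith
  rw [hu'r] at e2r
  rw [hu'i] at e2i
  rw [aux_norm_sq, aux_norm_sq, hu'r, hu'i]
  simp only [Pi.mul_apply, Pi.add_apply]
  field_simp at e2r e2i ⊢
  linear_combination (-2*(v x).re) * e2r + (-2*(v x).im) * e2i

/-- For a shock profile of Slemrod's model, a real `λ ≥ 0`, and a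
solution `(u, v)` of the integrated eigenvalue system, the integral identity
`λ ∫ (2 − vhat'/(2 vhat²))|v|² − (a/2) ∫ p''(vhat) vhat' |v|² + ∫ |v'|²/vhat = 0`
holds. -/
theorem real_spectrum_integral_identity
    (p p' p'' : ℝ → ℝ)
    (hp'd : ∀ s ∈ Ioi (0:ℝ), HasDerivAt p (p' s) s)
    (hp''d : ∀ s ∈ Ioi (0:ℝ), HasDerivAt p' (p'' s) s)
    (hp''cont : ContinuousOn p'' (Ioi 0))
    (hp'neg : ∀ s ∈ Ioi (0:ℝ), p' s < 0)
    (hp''pos : ∀ s ∈ Ioi (0:ℝ), 0 < p'' s)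
    (vp vm a d : ℝ)
    (hvp : 0 < vp) (hvlt : vp < vm) (hd : 0 ≤ d)
    (ha : a = -(vp - vm) / (p vp - p vm))
    (vhat vhat' vhat'' : ℝ → ℝ)
    (hpos : ∀ x, 0 < vhat x)
    (hder1 : ∀ x, HasDerivAt vhat (vhat' x) x)
    (hder2 : ∀ x, HasDerivAt vhat' (vhat'' x) x)
    (hprof : ∀ x, vhat x - vm + a * (p (vhat x) - p vm) = vhat' x / vhat x - d * vhat'' x)
    (hlim_m : Tendsto vhat atBot (𝓝 vm))
    (hlim_p : Tendsto vhat atTop (𝓝 vp))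
    (hlimd_m : Tendsto vhat' atBot (𝓝 0))
    (hlimd_p : Tendsto vhat' atTop (𝓝 0))
    (lam : ℝ) (hlam : 0 ≤ lam)
    (u u' u'' v v' v'' v''' : ℝ → ℂ)
    (hud1 : ∀ x, HasDerivAt u (u' x) x)
    (hud2 : ∀ x, HasDerivAt u' (u'' x) x)
    (hvd1 : ∀ x, HasDerivAt v (v' x) x)
    (hvd2 : ∀ x, HasDerivAt v' (v'' x) x)
    (hvd3 : ∀ x, HasDerivAt v'' (v''' x) x)
    (hL2 : ∀ g ∈ ([u, u', u'', v, v', v'', v'''] : List (ℝ → ℂ)),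
      MemLp g 2 volume)
    (hdecay : ∀ g ∈ ([u, u', u'', v, v', v'', v'''] : List (ℝ → ℂ)),
      Tendsto g atTop (𝓝 0) ∧ Tendsto g atBot (𝓝 0))
    (heq1 : ∀ x, (lam : ℂ) * v x + v' x - u' x = 0)
    (heq2 : ∀ x, (lam : ℂ) * u x + u' x
        - ((-a * p' (vhat x) - vhat' x / (vhat x) ^ 2 : ℝ) : ℂ) * v' x
      = u'' x / ((vhat x : ℝ) : ℂ) - (d : ℂ) * v''' x) :
    lam * (∫ x, (2 - vhat' x / (2 * (vhat x) ^ 2)) * ‖v x‖ ^ 2)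
      - (a / 2) * (∫ x, p'' (vhat x) * vhat' x * ‖v x‖ ^ 2)
      + (∫ x, ‖v' x‖ ^ 2 / vhat x) = 0 := by
  classical
  have hvm : (0:ℝ) < vm := hvp.trans hvlt
  have hcvhat : Continuous vhat :=
    Differentiable.continuous (fun x => (hder1 x).differentiableAt)
  have hcvhat' : Continuous vhat' :=
    Differentiable.continuous (fun x => (hder2 x).differentiableAt)
  have hcv : Continuous v := Differentiable.continuous (fun x => (hvd1 x).differentiableAt)
  have hcv' : Continuous v' := Differentiable.continuous (fun x => (hvd2 x).differentiableAt)
  obtain ⟨m, hm, hmle⟩ := aux_lower vhat hcvhat hvp hvm hpos hlim_p hlim_m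
  obtain ⟨C1, hC1⟩ := aux_bounded vhat' hcvhat' hlimd_p hlimd_m
  have hC1nn : 0 ≤ C1 := (abs_nonneg _).trans (hC1 0)
  have hcp2 : Continuous (fun x => p'' (vhat x)) :=
    hp''cont.comp_continuous hcvhat (fun x => hpos x)
  have htp2 : Tendsto (fun x => p'' (vhat x)) atTop (𝓝 (p'' vp)) :=
    ((hp''cont.continuousAt (Ioi_mem_nhds hvp)).tendsto).comp hlim_p
  have hbp2 : Tendsto (fun x => p'' (vhat x)) atBot (𝓝 (p'' vm)) :=
    ((hp''cont.continuousAt (Ioi_mem_nhds hvm)).tendsto).comp hlim_m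
  obtain ⟨C2, hC2⟩ := aux_bounded _ hcp2 htp2 hbp2
  have hC2nn : 0 ≤ C2 := (abs_nonneg _).trans (hC2 0)
  have hmemv : MemLp v 2 volume := hL2 v (by simp)
  have hmemv' : MemLp v' 2 volume := hL2 v' (by simp)
  have hnv : Integrable (fun x => ‖v x‖^2) volume :=
    (memLp_two_iff_integrable_sq_norm hmemv.aestronglyMeasurable).1 hmemv
  have hnv' : Integrable (fun x => ‖v' x‖^2) volume :=
    (memLp_two_iff_integrable_sq_norm hmemv'.aestronglyMeasurable).1 hmemv'
  have hcnv : Continuous (fun x => ‖v x‖^2) := (hcv.norm).pow 2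
  have hcnv' : Continuous (fun x => ‖v' x‖^2) := (hcv'.norm).pow 2
  have hI1 : Integrable (fun x => (2 - vhat' x / (2 * (vhat x)^2)) * ‖v x‖^2) volume := by
    refine (hnv.const_mul (2 + C1 / (2 * m^2))).mono'
      ((((continuous_const.sub (hcvhat'.div (continuous_const.mul (hcvhat.pow 2))
        (fun x => mul_ne_zero two_ne_zero (pow_ne_zero _ (hpos x).ne')))).mul hcnv)).aestronglyMeasurable)
      (ae_of_all _ fun x => ?_)
    rw [Real.norm_eq_abs, abs_mul, abs_of_nonneg (by positivity : (0:ℝ) ≤ ‖v x‖^2)]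
    have h1 : |vhat' x / (2 * (vhat x)^2)| ≤ C1 / (2 * m^2) := by
      rw [abs_div, abs_of_nonneg (by positivity : (0:ℝ) ≤ 2 * (vhat x)^2)]
      have hmx := hmle x
      gcongr
      exact hC1 x
    have h2 : |2 - vhat' x / (2 * (vhat x)^2)| ≤ 2 + C1 / (2 * m^2) := by
      calc |2 - vhat' x / (2 * (vhat x)^2)| ≤ |(2:ℝ)| + |vhat' x / (2 * (vhat x)^2)| :=
            abs_sub _ _
        _ ≤ 2 + C1 / (2 * m^2) := by rw [abs_two]; linarith
    exact mul_le_mul_of_nonneg_right h2 (by positivity)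
  have hI2 : Integrable (fun x => p'' (vhat x) * vhat' x * ‖v x‖^2) volume := by
    refine (hnv.const_mul (C2 * C1)).mono'
      (((hcp2.mul hcvhat').mul hcnv).aestronglyMeasurable)
      (ae_of_all _ fun x => ?_)
    rw [Real.norm_eq_abs, abs_mul, abs_of_nonneg (by positivity : (0:ℝ) ≤ ‖v x‖^2), abs_mul]
    exact mul_le_mul_of_nonneg_right
      (mul_le_mul (hC2 x) (hC1 x) (abs_nonneg _) hC2nn) (by positivity)
  have hI3 : Integrable (fun x => ‖v' x‖^2 / vhat x) volume := by
    refine (hnv'.const_mul (1/m)).mono'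
      ((hcnv'.div hcvhat (fun x => (hpos x).ne')).aestronglyMeasurable)
      (ae_of_all _ fun x => ?_)
    rw [Real.norm_eq_abs, abs_of_nonneg (by have := hpos x; positivity : (0:ℝ) ≤ ‖v' x‖^2 / vhat x)]
    calc ‖v' x‖^2 / vhat x ≤ ‖v' x‖^2 / m := by gcongr; exact hmle x
      _ = 1/m * ‖v' x‖^2 := by ring
  set A : ℝ → ℝ := fun x => lam * ((2 - vhat' x / (2 * (vhat x)^2)) * ‖v x‖^2)
      - a / 2 * (p'' (vhat x) * vhat' x * ‖v x‖^2) + ‖v' x‖^2 / vhat x with hAdef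
  have hA : Integrable A volume := ((hI1.const_mul lam).sub (hI2.const_mul (a/2))).add hI3
  have hu'f : u' = fun y => (lam : ℂ) * v y + v' y := by
    funext y; linear_combination -(heq1 y)
  have hu2 : ∀ x, u'' x = (lam : ℂ) * v' x + v'' x := by
    intro x
    have h := ((hvd1 x).const_mul (lam : ℂ)).add (hvd2 x)
    exact (hu'f ▸ hud2 x).unique h
  have hGA : ∀ x, HasDerivAt (auxG a d lam (fun y => p' (vhat y)) vhat u v v' v'') (-(A x)) x := by
    intro x
    exact auxG_hasDerivAt a d lam (fun y => p' (vhat y)) (fun y => p'' (vhat y) * vhat' y)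
      vhat vhat' u u' u'' v v' v'' v''' x (hpos x).ne'
      ((hp''d (vhat x) (hpos x)).comp x (hder1 x)) (hder1 x) (hud1 x)
      (hvd1 x) (hvd2 x) (hvd3 x) (heq1 x) (hu2 x) (heq2 x)
  have tR : ∀ (f : ℝ → ℂ), Tendsto f atTop (𝓝 0) → Tendsto (fun x => (f x).re) atTop (𝓝 0) := by
    intro f hf; simpa [Function.comp_def] using (Complex.continuous_re.tendsto 0).comp hf
  have tI : ∀ (f : ℝ → ℂ), Tendsto f atTop (𝓝 0) → Tendsto (fun x => (f x).im) atTop (𝓝 0) := by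
    intro f hf; simpa [Function.comp_def] using (Complex.continuous_im.tendsto 0).comp hf
  have tR' : ∀ (f : ℝ → ℂ), Tendsto f atBot (𝓝 0) → Tendsto (fun x => (f x).re) atBot (𝓝 0) := by
    intro f hf; simpa [Function.comp_def] using (Complex.continuous_re.tendsto 0).comp hf
  have tI' : ∀ (f : ℝ → ℂ), Tendsto f atBot (𝓝 0) → Tendsto (fun x => (f x).im) atBot (𝓝 0) := by
    intro f hf; simpa [Function.comp_def] using (Complex.continuous_im.tendsto 0).comp hf
  have hp'top : Tendsto (fun x => p' (vhat x)) atTop (𝓝 (p' vp)) :=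
    ((hp''d vp (mem_Ioi.2 hvp)).differentiableAt.continuousAt.tendsto).comp hlim_p
  have hp'bot : Tendsto (fun x => p' (vhat x)) atBot (𝓝 (p' vm)) :=
    ((hp''d vm (mem_Ioi.2 hvm)).differentiableAt.continuousAt.tendsto).comp hlim_m
  have hGtop : Tendsto (auxG a d lam (fun y => p' (vhat y)) vhat u v v' v'') atTop (𝓝 0) := by
    have hu0 := (hdecay u (by simp)).1
    have hv0 := (hdecay v (by simp)).1
    have hv'0 := (hdecay v' (by simp)).1
    have hv''0 := (hdecay v'' (by simp)).1
    have h :=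
      ((((((((((tR u hu0).mul (tR u hu0)).add ((tI u hu0).mul (tI u hu0))).const_mul
        ((1:ℝ)/2)).sub
        (((tR u hu0).mul (tR v hv0)).add ((tI u hu0).mul (tI v hv0)))).add
        (((tR v hv0).mul (tR v hv0)).add ((tI v hv0).mul (tI v hv0)))).add
        ((hp'top.const_mul (a/2)).mul
          (((tR v hv0).mul (tR v hv0)).add ((tI v hv0).mul (tI v hv0))))).sub
        (((((tR v hv0).mul (tR v hv0)).add ((tI v hv0).mul (tI v hv0))).div hlim_p
          hvp.ne').const_mul (lam/2))).sub
        ((((tR v' hv'0).mul (tR v hv0)).add ((tI v' hv'0).mul (tI v hv0))).div hlim_p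
          hvp.ne')).add
        ((((tR v'' hv''0).mul (tR v hv0)).add ((tI v'' hv''0).mul (tI v hv0))).const_mul d)).sub
        ((((tR v' hv'0).mul (tR v' hv'0)).add ((tI v' hv'0).mul (tI v' hv'0))).const_mul (d/2))
    unfold auxG
    convert h using 3
    all_goals norm_num
  have hGbot : Tendsto (auxG a d lam (fun y => p' (vhat y)) vhat u v v' v'') atBot (𝓝 0) := by
    have hu0 := (hdecay u (by simp)).2
    have hv0 := (hdecay v (by simp)).2
    have hv'0 := (hdecay v' (by simp)).2
    have hv''0 := (hdecay v'' (by simp)).2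
    have h :=
      ((((((((((tR' u hu0).mul (tR' u hu0)).add ((tI' u hu0).mul (tI' u hu0))).const_mul
        ((1:ℝ)/2)).sub
        (((tR' u hu0).mul (tR' v hv0)).add ((tI' u hu0).mul (tI' v hv0)))).add
        (((tR' v hv0).mul (tR' v hv0)).add ((tI' v hv0).mul (tI' v hv0)))).add
        ((hp'bot.const_mul (a/2)).mul
          (((tR' v hv0).mul (tR' v hv0)).add ((tI' v hv0).mul (tI' v hv0))))).sub
        (((((tR' v hv0).mul (tR' v hv0)).add ((tI' v hv0).mul (tI' v hv0))).div hlim_m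
          hvm.ne').const_mul (lam/2))).sub
        ((((tR' v' hv'0).mul (tR' v hv0)).add ((tI' v' hv'0).mul (tI' v hv0))).div hlim_m
          hvm.ne')).add
        ((((tR' v'' hv''0).mul (tR' v hv0)).add ((tI' v'' hv''0).mul (tI' v hv0))).const_mul d)).sub
        ((((tR' v' hv'0).mul (tR' v' hv'0)).add ((tI' v' hv'0).mul (tI' v' hv'0))).const_mul (d/2))
    unfold auxG
    convert h using 3
    all_goals norm_num
  have hAneg : Integrable (fun x => -(A x)) volume := hA.neg
  have h1 : ∫ x in Iic (0:ℝ), -(A x) =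
      auxG a d lam (fun y => p' (vhat y)) vhat u v v' v'' 0 - 0 :=
    integral_Iic_of_hasDerivAt_of_tendsto (hGA 0).continuousAt.continuousWithinAt
      (fun x _ => hGA x) hAneg.integrableOn hGbot
  have h2 : ∫ x in Ioi (0:ℝ), -(A x) =
      0 - auxG a d lam (fun y => p' (vhat y)) vhat u v v' v'' 0 :=
    integral_Ioi_of_hasDerivAt_of_tendsto (hGA 0).continuousAt.continuousWithinAt
      (fun x _ => hGA x) hAneg.integrableOn hGtop
  have h3 := intervalIntegral.integral_Iic_add_Ioi (b := (0:ℝ)) (f := fun x => -(A x))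
    hAneg.integrableOn hAneg.integrableOn
  have hAzero : ∫ x, A x = 0 := by
    have h4 : ∫ x, -(A x) = 0 := by rw [← h3, h1, h2]; ring
    rw [integral_neg] at h4; linarith
  have hJ1 : Integrable (fun x => lam * ((2 - vhat' x / (2 * (vhat x)^2)) * ‖v x‖^2)) volume :=
    hI1.const_mul lam
  have hJ2 : Integrable (fun x => a / 2 * (p'' (vhat x) * vhat' x * ‖v x‖^2)) volume :=
    hI2.const_mul (a/2)
  have hJ12 : Integrable (fun x => lam * ((2 - vhat' x / (2 * (vhat x)^2)) * ‖v x‖^2)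
      - a / 2 * (p'' (vhat x) * vhat' x * ‖v x‖^2)) volume := hJ1.sub hJ2
  rw [hAdef] at hAzero
  rw [integral_add hJ12 hI3, integral_sub hJ1 hJ2,
    integral_const_mul, integral_const_mul] at hAzero
  linarith [hAzero]
end

section
/- Let v̂ be a monotone shock profile (v̂′(x) < 0 for all x), and let λ ∈ ℝ with λ ≥ 0. If (u, v) solves the integrated eigenvalue system λv + v′ − u′ = 0, λu + u′ − f(v̂)v′ = u″/v̂ − d v‴ (with f(v̂) = −a p′(v̂) − v̂′/v̂², u of class C², v of class C³, and u, u′, u″, v, v′, v″, v‴ square-integrable and tending to 0 at ±∞), then u ≡ 0 and v ≡ 0. In particular, monotone shocks of Slemrod's model have no unstable real spectrum, regardless of amplitude. -/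
open Filter Topology Set MeasureTheory

/-- Monotone shocks of Slemrod's model have no unstable real
spectrum, regardless of amplitude: for a monotone profile (`vhat' < 0`) and a
real `λ ≥ 0`, any solution `(u, v)` of the integrated eigenvalue system with
the stated decay is identically zero. -/
theorem monotone_no_unstable_real_spectrum
    (p p' p'' : ℝ → ℝ)
    (hp'd : ∀ s ∈ Ioi (0:ℝ), HasDerivAt p (p' s) s)
    (hp''d : ∀ s ∈ Ioi (0:ℝ), HasDerivAt p' (p'' s) s)
    (hp''cont : ContinuousOn p'' (Ioi 0))
    (hp'neg : ∀ s ∈ Ioi (0:ℝ), p' s < 0)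
    (hp''pos : ∀ s ∈ Ioi (0:ℝ), 0 < p'' s)
    (vp vm a d : ℝ)
    (hvp : 0 < vp) (hvlt : vp < vm) (hd : 0 ≤ d)
    (ha : a = -(vp - vm) / (p vp - p vm))
    (vhat vhat' vhat'' : ℝ → ℝ)
    (hpos : ∀ x, 0 < vhat x)
    (hder1 : ∀ x, HasDerivAt vhat (vhat' x) x)
    (hder2 : ∀ x, HasDerivAt vhat' (vhat'' x) x)
    (hmono : ∀ x, vhat' x < 0)
    (hprof : ∀ x, vhat x - vm + a * (p (vhat x) - p vm) = vhat' x / vhat x - d * vhat'' x)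
    (hlim_m : Tendsto vhat atBot (𝓝 vm))
    (hlim_p : Tendsto vhat atTop (𝓝 vp))
    (hlimd_m : Tendsto vhat' atBot (𝓝 0))
    (hlimd_p : Tendsto vhat' atTop (𝓝 0))
    (lam : ℝ) (hlam : 0 ≤ lam)
    (u u' u'' v v' v'' v''' : ℝ → ℂ)
    (hud1 : ∀ x, HasDerivAt u (u' x) x)
    (hud2 : ∀ x, HasDerivAt u' (u'' x) x)
    (hvd1 : ∀ x, HasDerivAt v (v' x) x)
    (hvd2 : ∀ x, HasDerivAt v' (v'' x) x)
    (hvd3 : ∀ x, HasDerivAt v'' (v''' x) x)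
    (hL2 : ∀ g ∈ ([u, u', u'', v, v', v'', v'''] : List (ℝ → ℂ)),
      MemLp g 2 volume)
    (hdecay : ∀ g ∈ ([u, u', u'', v, v', v'', v'''] : List (ℝ → ℂ)),
      Tendsto g atTop (𝓝 0) ∧ Tendsto g atBot (𝓝 0))
    (heq1 : ∀ x, (lam : ℂ) * v x + v' x - u' x = 0)
    (heq2 : ∀ x, (lam : ℂ) * u x + u' x
        - ((-a * p' (vhat x) - vhat' x / (vhat x) ^ 2 : ℝ) : ℂ) * v' x
      = u'' x / ((vhat x : ℝ) : ℂ) - (d : ℂ) * v''' x) :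
    (∀ x, u x = 0) ∧ (∀ x, v x = 0) := by
  -- positivity of `a`
  have hppos : p vm < p vp := by
    have hanti : StrictAntiOn p (Icc vp vm) := by
      apply strictAntiOn_of_deriv_neg (convex_Icc _ _)
      · intro s hs
        exact ((hp'd s (mem_Ioi.mpr (lt_of_lt_of_le hvp hs.1))).continuousAt).continuousWithinAt
      · intro s hs
        rw [interior_Icc] at hs
        rw [(hp'd s (mem_Ioi.mpr (lt_trans hvp hs.1))).deriv]
        exact hp'neg s (mem_Ioi.mpr (lt_trans hvp hs.1))
    exact hanti (mem_Icc.mpr ⟨le_refl _, le_of_lt hvlt⟩)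
      (mem_Icc.mpr ⟨le_of_lt hvlt, le_refl _⟩) hvlt
  have hapos : 0 < a := by
    rw [ha]
    apply div_pos <;> linarith
  -- decay facts
  have hu_t := hdecay u (by simp)
  have hv_t := hdecay v (by simp)
  have hv'_t := hdecay v' (by simp)
  have hv''_t := hdecay v'' (by simp)
  -- derivative of the first equation : u'' = lam * v' + v''
  have hu'eq : u' = fun y => (lam : ℂ) * v y + v' y := funext fun y => by
    linear_combination -(heq1 y)
  have hde1 : ∀ x, u'' x = (lam : ℂ) * v' x + v'' x := by
    intro x
    have h2 := hud2 x
    rw [hu'eq] at h2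
    exact HasDerivAt.unique h2 (((hvd1 x).const_mul ((lam : ℂ))).add (hvd2 x))
  -- key pointwise energy identity : the energy density has derivative -N ≤ 0
  have hkey : ∀ x : ℝ, HasDerivAt (fun y => ((1/2 : ℂ) * ((v y - u y) * (starRingEnd ℂ) (v y - u y)) + (1/2 : ℂ) * (v y * (starRingEnd ℂ) (v y)) - (1/2 : ℂ) * ((-(a:ℂ) * ((p' (vhat y) : ℝ) : ℂ) - ((vhat' y : ℝ) : ℂ) * ((((vhat y)⁻¹)^2 : ℝ) : ℂ)) * (v y * (starRingEnd ℂ) (v y))) - ((lam:ℂ)/2) * ((v y * (starRingEnd ℂ) (v y)) * (((vhat y)⁻¹ : ℝ) : ℂ)) - (1/2 : ℂ) * ((((vhat y)⁻¹ : ℝ) : ℂ) * (v' y * (starRingEnd ℂ) (v y) + v y * (starRingEnd ℂ) (v' y))) - (1/2 : ℂ) * ((((vhat' y : ℝ) : ℂ) * ((((vhat y)⁻¹)^2 : ℝ) : ℂ)) * (v y * (starRingEnd ℂ) (v y))) + ((d:ℂ)/2) * (v'' y * (starRingEnd ℂ) (v y) + v y * (starRingEnd ℂ) (v'' y)) - ((d:ℂ)/2)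 * (v' y * (starRingEnd ℂ) (v' y))).re) (-(2*lam*Complex.normSq (v x) + a * p'' (vhat x) * (-vhat' x)/2 * Complex.normSq (v x) + lam/2 * (-vhat' x) * ((vhat x)⁻¹)^2 * Complex.normSq (v x) + Complex.normSq (v' x) * (vhat x)⁻¹)) x := by
    intro x
    have hcv : HasDerivAt (fun y => (starRingEnd ℂ) (v y)) ((starRingEnd ℂ) (v' x)) x := by
      simpa only [starRingEnd_apply] using (hvd1 x).star
    have hcv' : HasDerivAt (fun y => (starRingEnd ℂ) (v' y)) ((starRingEnd ℂ) (v'' x)) x := by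
      simpa only [starRingEnd_apply] using (hvd2 x).star
    have hcv'' : HasDerivAt (fun y => (starRingEnd ℂ) (v'' y)) ((starRingEnd ℂ) (v''' x)) x := by
      simpa only [starRingEnd_apply] using (hvd3 x).star
    have hcw : HasDerivAt (fun y => (starRingEnd ℂ) (v y - u y))
        ((starRingEnd ℂ) (v' x - u' x)) x := by
      simpa only [starRingEnd_apply, Pi.sub_apply] using ((hvd1 x).sub (hud1 x)).star
    have hp'C : HasDerivAt (fun y => ((p' (vhat y) : ℝ) : ℂ))
        ((p'' (vhat x) * vhat' x : ℝ) : ℂ) x :=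
      HasDerivAt.ofReal_comp ((hp''d (vhat x) (mem_Ioi.mpr (hpos x))).comp x (hder1 x))
    have hivC : HasDerivAt (fun y => (((vhat y)⁻¹ : ℝ) : ℂ))
        ((-vhat' x / vhat x ^ 2 : ℝ) : ℂ) x :=
      HasDerivAt.ofReal_comp ((hder1 x).inv (ne_of_gt (hpos x)))
    have hvh'C : HasDerivAt (fun y => ((vhat' y : ℝ) : ℂ)) ((vhat'' x : ℝ) : ℂ) x :=
      (hder2 x).ofReal_comp
    have hiv2C : HasDerivAt (fun y => ((((vhat y)⁻¹)^2 : ℝ) : ℂ))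
        (((2:ℕ) * ((vhat x)⁻¹)^(2-1) * (-vhat' x / vhat x ^ 2) : ℝ) : ℂ) x :=
      HasDerivAt.ofReal_comp (((hder1 x).inv (ne_of_gt (hpos x))).pow 2)
    have T1 := (((hvd1 x).sub (hud1 x)).mul hcw).const_mul ((1:ℂ)/2)
    have T2 := ((hvd1 x).mul hcv).const_mul ((1:ℂ)/2)
    have T3 := (((hp'C.const_mul (-(a:ℂ))).sub (hvh'C.mul hiv2C)).mul
      ((hvd1 x).mul hcv)).const_mul ((1:ℂ)/2)
    have T4 := (((hvd1 x).mul hcv).mul hivC).const_mul ((lam:ℂ)/2)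
    have T5 := (hivC.mul (((hvd2 x).mul hcv).add ((hvd1 x).mul hcv'))).const_mul ((1:ℂ)/2)
    have T6 := ((hvh'C.mul hiv2C).mul ((hvd1 x).mul hcv)).const_mul ((1:ℂ)/2)
    have T7 := (((hvd3 x).mul hcv).add ((hvd1 x).mul hcv'')).const_mul ((d:ℂ)/2)
    have T8 := ((hvd2 x).mul hcv').const_mul ((d:ℂ)/2)
    have base := ((((((T1.add T2).sub T3).sub T4).sub T5).sub T6).add T7).sub T8
    have heq := heq2 x
    push_cast at heq
    have hce2x := congrArg (starRingEnd ℂ) heq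
    simp only [map_add, map_sub, map_mul, map_neg, map_div₀, map_pow, map_inv₀, map_ofNat,
      Complex.conj_ofReal, map_zero, map_one] at hce2x
    have he1x := heq1 x
    have hce1x := congrArg (starRingEnd ℂ) he1x
    simp only [map_add, map_sub, map_mul, map_neg, map_div₀, map_pow, map_inv₀, map_ofNat,
      Complex.conj_ofReal, map_zero, map_one] at hce1x
    have hde1x := hde1 x
    have hcde1x := congrArg (starRingEnd ℂ) hde1x
    simp only [map_add, map_sub, map_mul, map_neg, map_div₀, map_pow, map_inv₀, map_ofNat,
      Complex.conj_ofReal, map_zero, map_one] at hcde1x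
    have hDA : HasDerivAt (fun y => (1/2 : ℂ) * ((v y - u y) * (starRingEnd ℂ) (v y - u y)) + (1/2 : ℂ) * (v y * (starRingEnd ℂ) (v y)) - (1/2 : ℂ) * ((-(a:ℂ) * ((p' (vhat y) : ℝ) : ℂ) - ((vhat' y : ℝ) : ℂ) * ((((vhat y)⁻¹)^2 : ℝ) : ℂ)) * (v y * (starRingEnd ℂ) (v y))) - ((lam:ℂ)/2) * ((v y * (starRingEnd ℂ) (v y)) * (((vhat y)⁻¹ : ℝ) : ℂ)) - (1/2 : ℂ) * ((((vhat y)⁻¹ : ℝ) : ℂ) * (v' y * (starRingEnd ℂ) (v y) + v y * (starRingEnd ℂ) (v' y))) - (1/2 : ℂ) * ((((vhat' y : ℝ) : ℂ) * ((((vhat y)⁻¹)^2 : ℝ) : ℂ)) * (v y * (starRingEnd ℂ) (v y))) + ((d:ℂ)/2) * (v'' y * (starRingEnd ℂ) (v y) + v y * (starRingEnd ℂ) (v'' y)) - ((d:ℂ)/2) * (v' y * (starRingEnd ℂ) (v' y))) (-((2*lam*Complex.normSq (v x) + a * p'' (vhat x) * (-vhat' x)/2 * Complex.normSq (v x) + lam/2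 * (-vhat' x) * ((vhat x)⁻¹)^2 * Complex.normSq (v x) + Complex.normSq (v' x) * (vhat x)⁻¹ : ℝ) : ℂ)) x := by
      convert base using 1
      case e'_4 => rfl
      case e'_8 => rfl
      push_cast
      simp only [← Complex.mul_conj, map_sub, Pi.mul_apply, Pi.sub_apply, Pi.add_apply]
      linear_combination
        (-(1:ℂ)/2) * (starRingEnd ℂ) (v x) * heq - ((1:ℂ)/2) * v x * hce2x -
          ((starRingEnd ℂ) (v x) - (starRingEnd ℂ) (u x)/2) * he1x -
          (v x - u x/2) * hce1x -
          ((1:ℂ)/2) * (starRingEnd ℂ) (v x) * ((vhat x : ℝ) : ℂ)⁻¹ * hde1x -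
          ((1:ℂ)/2) * v x * ((vhat x : ℝ) : ℂ)⁻¹ * hcde1x
    exact Complex.reCLM.hasFDerivAt.comp_hasDerivAt x hDA
  -- the energy tends to zero at both ends
  have hlim : ∀ (l : Filter ℝ) (vl : ℝ), 0 < vl → Tendsto vhat l (𝓝 vl) →
      Tendsto vhat' l (𝓝 0) → Tendsto u l (𝓝 0) → Tendsto v l (𝓝 0) →
      Tendsto v' l (𝓝 0) → Tendsto v'' l (𝓝 0) →
      Tendsto (fun y => ((1/2 : ℂ) * ((v y - u y) * (starRingEnd ℂ) (v y - u y)) + (1/2 : ℂ) * (v y * (starRingEnd ℂ) (v y)) - (1/2 : ℂ) * ((-(a:ℂ) * ((p' (vhat y) : ℝ) : ℂ) - ((vhat' y : ℝ) : ℂ) * ((((vhat y)⁻¹)^2 : ℝ) : ℂ)) * (v y * (starRingEnd ℂ) (v y))) - ((lam:ℂ)/2) * ((v y * (starRingEnd ℂ) (v y)) * (((vhat y)⁻¹ : ℝ) : ℂ)) - (1/2 : ℂ) * ((((vhat y)⁻¹ : ℝ) : ℂ) * (v' y * (starRingEnd ℂ) (v y) + v y * (starRingEnd ℂ) (v' y)))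 - (1/2 : ℂ) * ((((vhat' y : ℝ) : ℂ) * ((((vhat y)⁻¹)^2 : ℝ) : ℂ)) * (v y * (starRingEnd ℂ) (v y))) + ((d:ℂ)/2) * (v'' y * (starRingEnd ℂ) (v y) + v y * (starRingEnd ℂ) (v'' y)) - ((d:ℂ)/2) * (v' y * (starRingEnd ℂ) (v' y))).re) l (𝓝 0) := by
    intro l vl hvl hT hT' hTu hTv hTv' hTv''
    have hC0 : ∀ g : ℝ → ℂ, Tendsto g l (𝓝 0) →
        Tendsto (fun y => (starRingEnd ℂ) (g y)) l (𝓝 0) := by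
      intro g hg
      simpa only [starRingEnd_apply, star_zero, Function.comp_def] using (continuous_star.tendsto (0:ℂ)).comp hg
    have hofR : ∀ (g : ℝ → ℝ) (c : ℝ), Tendsto g l (𝓝 c) →
        Tendsto (fun y => ((g y : ℝ) : ℂ)) l (𝓝 ((c : ℝ) : ℂ)) := fun g c hg =>
      (Complex.continuous_ofReal.tendsto c).comp hg
    have hp'T : Tendsto (fun y => ((p' (vhat y) : ℝ) : ℂ)) l (𝓝 ((p' vl : ℝ) : ℂ)) :=
      hofR _ _ (Filter.Tendsto.comp ((hp''d vl (mem_Ioi.mpr hvl)).continuousAt) hT)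
    have hivT : Tendsto (fun y => (((vhat y)⁻¹ : ℝ) : ℂ)) l (𝓝 (((vl⁻¹ : ℝ) : ℝ) : ℂ)) :=
      hofR _ _ (hT.inv₀ (ne_of_gt hvl))
    have hvh'T : Tendsto (fun y => ((vhat' y : ℝ) : ℂ)) l (𝓝 ((0 : ℝ) : ℂ)) := hofR _ _ hT'
    have hiv2T : Tendsto (fun y => ((((vhat y)⁻¹)^2 : ℝ) : ℂ)) l (𝓝 (((vl⁻¹)^2 : ℝ) : ℂ)) :=
      hofR _ _ ((hT.inv₀ (ne_of_gt hvl)).pow 2)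
    have hTw : Tendsto (fun y => v y - u y) l (𝓝 0) := by simpa using hTv.sub hTu
    have S1 := (hTw.mul (hC0 _ hTw)).const_mul ((1:ℂ)/2)
    have S2 := (hTv.mul (hC0 _ hTv)).const_mul ((1:ℂ)/2)
    have S3 := (((hp'T.const_mul (-(a:ℂ))).sub (hvh'T.mul hiv2T)).mul
      (hTv.mul (hC0 _ hTv))).const_mul ((1:ℂ)/2)
    have S4 := ((hTv.mul (hC0 _ hTv)).mul hivT).const_mul ((lam:ℂ)/2)
    have S5 := (hivT.mul ((hTv'.mul (hC0 _ hTv)).add (hTv.mul (hC0 _ hTv')))).const_mul ((1:ℂ)/2)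
    have S6 := ((hvh'T.mul hiv2T).mul (hTv.mul (hC0 _ hTv))).const_mul ((1:ℂ)/2)
    have S7 := ((hTv''.mul (hC0 _ hTv)).add (hTv.mul (hC0 _ hTv''))).const_mul ((d:ℂ)/2)
    have S8 := (hTv'.mul (hC0 _ hTv')).const_mul ((d:ℂ)/2)
    have big := ((((((S1.add S2).sub S3).sub S4).sub S5).sub S6).add S7).sub S8
    have big2 : Tendsto (fun y => (1/2 : ℂ) * ((v y - u y) * (starRingEnd ℂ) (v y - u y)) + (1/2 : ℂ) * (v y * (starRingEnd ℂ) (v y)) - (1/2 : ℂ) * ((-(a:ℂ) * ((p' (vhat y) : ℝ) : ℂ) - ((vhat' y : ℝ) : ℂ) * ((((vhat y)⁻¹)^2 : ℝ) : ℂ)) * (v y * (starRingEnd ℂ) (v y))) - ((lam:ℂ)/2) * ((v y * (starRingEnd ℂ) (v y)) * (((vhat y)⁻¹ : ℝ) : ℂ)) - (1/2 : ℂ) * ((((vhat y)⁻¹ : ℝ) : ℂ) * (v' y * (starRingEnd ℂ) (v y) + v y * (starRingEnd ℂ) (v' y))) - (1/2 : ℂ) * ((((vhat' y : ℝ) : ℂ)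 * ((((vhat y)⁻¹)^2 : ℝ) : ℂ)) * (v y * (starRingEnd ℂ) (v y))) + ((d:ℂ)/2) * (v'' y * (starRingEnd ℂ) (v y) + v y * (starRingEnd ℂ) (v'' y)) - ((d:ℂ)/2) * (v' y * (starRingEnd ℂ) (v' y))) l (𝓝 0) := by
      convert big using 2
      norm_num
    exact (Complex.continuous_re.tendsto (0:ℂ)).comp big2
  -- N is nonnegative
  have hNnonneg : ∀ x : ℝ, 0 ≤ 2*lam*Complex.normSq (v x) + a * p'' (vhat x) * (-vhat' x)/2 * Complex.normSq (v x) + lam/2 * (-vhat' x) * ((vhat x)⁻¹)^2 * Complex.normSq (v x) + Complex.normSq (v' x) * (vhat x)⁻¹ := by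
    intro x
    have h1 : 0 ≤ 2*lam*Complex.normSq (v x) :=
      mul_nonneg (by linarith) (Complex.normSq_nonneg _)
    have h2 : 0 ≤ a * p'' (vhat x) * (-vhat' x)/2 * Complex.normSq (v x) := by
      apply mul_nonneg _ (Complex.normSq_nonneg _)
      have hpp := hp''pos (vhat x) (mem_Ioi.mpr (hpos x))
      have hmm := hmono x
      apply div_nonneg _ (by norm_num)
      exact mul_nonneg (mul_nonneg hapos.le hpp.le) (by linarith)
    have h3 : 0 ≤ lam/2 * (-vhat' x) * ((vhat x)⁻¹)^2 * Complex.normSq (v x) := by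
      apply mul_nonneg _ (Complex.normSq_nonneg _)
      apply mul_nonneg (mul_nonneg (by linarith) (by linarith [hmono x])) (sq_nonneg _)
    have h4 : 0 ≤ Complex.normSq (v' x) * (vhat x)⁻¹ :=
      mul_nonneg (Complex.normSq_nonneg _) (inv_nonneg.mpr (le_of_lt (hpos x)))
    linarith
  -- the energy is antitone and tends to 0 at both ends, hence vanishes
  have hdiff : Differentiable ℝ (fun y => ((1/2 : ℂ) * ((v y - u y) * (starRingEnd ℂ) (v y - u y)) + (1/2 : ℂ) * (v y * (starRingEnd ℂ) (v y)) - (1/2 : ℂ) * ((-(a:ℂ) * ((p' (vhat y) : ℝ) : ℂ) - ((vhat' y : ℝ) : ℂ) * ((((vhat y)⁻¹)^2 : ℝ) : ℂ)) * (v y * (starRingEnd ℂ) (v y))) - ((lam:ℂ)/2) * ((v y * (starRingEnd ℂ) (v y)) * (((vhat y)⁻¹ : ℝ) : ℂ)) - (1/2 : ℂ) * ((((vhat y)⁻¹ : ℝ) : ℂ) * (v' y * (starRingEnd ℂ) (v y) + v y * (starRingEnd ℂ) (v' y))) - (1/2 : ℂ) * ((((vhat' y : ℝ) : ℂ) * ((((vhat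 y)⁻¹)^2 : ℝ) : ℂ)) * (v y * (starRingEnd ℂ) (v y))) + ((d:ℂ)/2) * (v'' y * (starRingEnd ℂ) (v y) + v y * (starRingEnd ℂ) (v'' y)) - ((d:ℂ)/2) * (v' y * (starRingEnd ℂ) (v' y))).re) := fun x => (hkey x).differentiableAt
  have hant : Antitone (fun y => ((1/2 : ℂ) * ((v y - u y) * (starRingEnd ℂ) (v y - u y)) + (1/2 : ℂ) * (v y * (starRingEnd ℂ) (v y)) - (1/2 : ℂ) * ((-(a:ℂ) * ((p' (vhat y) : ℝ) : ℂ) - ((vhat' y : ℝ) : ℂ) * ((((vhat y)⁻¹)^2 : ℝ) : ℂ)) * (v y * (starRingEnd ℂ) (v y))) - ((lam:ℂ)/2) * ((v y * (starRingEnd ℂ) (v y)) * (((vhat y)⁻¹ : ℝ) : ℂ)) - (1/2 : ℂ) * ((((vhat y)⁻¹ : ℝ) : ℂ) * (v' y * (starRingEnd ℂ) (v y) + v y * (starRingEnd ℂ) (v' y))) - (1/2 : ℂ) * ((((vhat' y : ℝ) : ℂ) * ((((vhat y)⁻¹)^2 : ℝ) : ℂ)) * (v y * (starRingEnd ℂ)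 (v y))) + ((d:ℂ)/2) * (v'' y * (starRingEnd ℂ) (v y) + v y * (starRingEnd ℂ) (v'' y)) - ((d:ℂ)/2) * (v' y * (starRingEnd ℂ) (v' y))).re) := by
    apply antitone_of_deriv_nonpos hdiff
    intro x
    rw [(hkey x).deriv]
    linarith [hNnonneg x]
  have htop : Tendsto (fun y => ((1/2 : ℂ) * ((v y - u y) * (starRingEnd ℂ) (v y - u y)) + (1/2 : ℂ) * (v y * (starRingEnd ℂ) (v y)) - (1/2 : ℂ) * ((-(a:ℂ) * ((p' (vhat y) : ℝ) : ℂ) - ((vhat' y : ℝ) : ℂ) * ((((vhat y)⁻¹)^2 : ℝ) : ℂ)) * (v y * (starRingEnd ℂ) (v y))) - ((lam:ℂ)/2) * ((v y * (starRingEnd ℂ) (v y)) * (((vhat y)⁻¹ : ℝ) : ℂ)) - (1/2 : ℂ) * ((((vhat y)⁻¹ : ℝ) : ℂ) * (v' y * (starRingEnd ℂ) (v y) + v y * (starRingEnd ℂ) (v' y))) - (1/2 : ℂ) * ((((vhat' y : ℝ) : ℂ) * ((((vhat y)⁻¹)^2 : ℝ) : ℂ)) * (v y * (starRingEnd ℂ)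 (v y))) + ((d:ℂ)/2) * (v'' y * (starRingEnd ℂ) (v y) + v y * (starRingEnd ℂ) (v'' y)) - ((d:ℂ)/2) * (v' y * (starRingEnd ℂ) (v' y))).re) atTop (𝓝 0) :=
    hlim atTop vp hvp hlim_p hlimd_p hu_t.1 hv_t.1 hv'_t.1 hv''_t.1
  have hbot : Tendsto (fun y => ((1/2 : ℂ) * ((v y - u y) * (starRingEnd ℂ) (v y - u y)) + (1/2 : ℂ) * (v y * (starRingEnd ℂ) (v y)) - (1/2 : ℂ) * ((-(a:ℂ) * ((p' (vhat y) : ℝ) : ℂ) - ((vhat' y : ℝ) : ℂ) * ((((vhat y)⁻¹)^2 : ℝ) : ℂ)) * (v y * (starRingEnd ℂ) (v y))) - ((lam:ℂ)/2) * ((v y * (starRingEnd ℂ) (v y)) * (((vhat y)⁻¹ : ℝ) : ℂ)) - (1/2 : ℂ) * ((((vhat y)⁻¹ : ℝ) : ℂ) * (v' y * (starRingEnd ℂ) (v y) + v y * (starRingEnd ℂ) (v' y))) - (1/2 : ℂ) * ((((vhat' y : ℝ) : ℂ) * ((((vhat y)⁻¹)^2 : ℝ) : ℂ)) * (v y * (starRingEnd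 ℂ) (v y))) + ((d:ℂ)/2) * (v'' y * (starRingEnd ℂ) (v y) + v y * (starRingEnd ℂ) (v'' y)) - ((d:ℂ)/2) * (v' y * (starRingEnd ℂ) (v' y))).re) atBot (𝓝 0) :=
    hlim atBot vm (lt_trans hvp hvlt) hlim_m hlimd_m hu_t.2 hv_t.2 hv'_t.2 hv''_t.2
  have hDzero : ∀ x : ℝ, ((1/2 : ℂ) * ((v x - u x) * (starRingEnd ℂ) (v x - u x)) + (1/2 : ℂ) * (v x * (starRingEnd ℂ) (v x)) - (1/2 : ℂ) * ((-(a:ℂ) * ((p' (vhat x) : ℝ) : ℂ) - ((vhat' x : ℝ) : ℂ) * ((((vhat x)⁻¹)^2 : ℝ) : ℂ)) * (v x * (starRingEnd ℂ) (v x))) - ((lam:ℂ)/2) * ((v x * (starRingEnd ℂ) (v x)) * (((vhat x)⁻¹ : ℝ) : ℂ)) - (1/2 : ℂ) * ((((vhat x)⁻¹ : ℝ) : ℂ) * (v' x * (starRingEnd ℂ) (v x) + v x * (starRingEnd ℂ) (v' x))) - (1/2 : ℂ) * ((((vhat' x : ℝ) : ℂ) * ((((vhat x)⁻¹)^2 :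 ℝ) : ℂ)) * (v x * (starRingEnd ℂ) (v x))) + ((d:ℂ)/2) * (v'' x * (starRingEnd ℂ) (v x) + v x * (starRingEnd ℂ) (v'' x)) - ((d:ℂ)/2) * (v' x * (starRingEnd ℂ) (v' x))).re = 0 := by
    intro x
    refine le_antisymm ?_ ?_
    · exact ge_of_tendsto hbot (eventually_atBot.mpr ⟨x, fun c hc => hant hc⟩)
    · exact le_of_tendsto htop (eventually_atTop.mpr ⟨x, fun c hc => hant hc⟩)
  have hNzero : ∀ x : ℝ, 2*lam*Complex.normSq (v x) + a * p'' (vhat x) * (-vhat' x)/2 * Complex.normSq (v x) + lam/2 * (-vhat' x) * ((vhat x)⁻¹)^2 * Complex.normSq (v x) + Complex.normSq (v' x) * (vhat x)⁻¹ = 0 := by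
    intro x
    have hDfun : (fun y => ((1/2 : ℂ) * ((v y - u y) * (starRingEnd ℂ) (v y - u y)) + (1/2 : ℂ) * (v y * (starRingEnd ℂ) (v y)) - (1/2 : ℂ) * ((-(a:ℂ) * ((p' (vhat y) : ℝ) : ℂ) - ((vhat' y : ℝ) : ℂ) * ((((vhat y)⁻¹)^2 : ℝ) : ℂ)) * (v y * (starRingEnd ℂ) (v y))) - ((lam:ℂ)/2) * ((v y * (starRingEnd ℂ) (v y)) * (((vhat y)⁻¹ : ℝ) : ℂ)) - (1/2 : ℂ) * ((((vhat y)⁻¹ : ℝ) : ℂ) * (v' y * (starRingEnd ℂ) (v y) + v y * (starRingEnd ℂ) (v' y))) - (1/2 : ℂ) * ((((vhat' y : ℝ) : ℂ) * ((((vhat y)⁻¹)^2 : ℝ) : ℂ)) * (v y * (starRingEnd ℂ) (v y))) + ((d:ℂ)/2) * (v'' y * (starRingEnd ℂ) (v y) + v y * (starRingEnd ℂ) (v'' y)) - ((d:ℂ)/2) * (v' y * (starRingEnd ℂ) (v' y))).re) = fun _ => (0:ℝ) := funext hDzero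
    have h0 : HasDerivAt (fun _ : ℝ => (0:ℝ)) (-(2*lam*Complex.normSq (v x) + a * p'' (vhat x) * (-vhat' x)/2 * Complex.normSq (v x) + lam/2 * (-vhat' x) * ((vhat x)⁻¹)^2 * Complex.normSq (v x) + Complex.normSq (v' x) * (vhat x)⁻¹)) x := hDfun ▸ hkey x
    have := h0.unique (hasDerivAt_const x 0)
    linarith
  -- extract v = 0
  have hvz : ∀ x, v x = 0 := by
    intro x
    have h := hNzero x
    have hc2 : 0 < a * p'' (vhat x) * (-vhat' x)/2 := by
      have hpp := hp''pos (vhat x) (mem_Ioi.mpr (hpos x))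
      have hmm := hmono x
      apply div_pos _ (by norm_num)
      exact mul_pos (mul_pos hapos hpp) (by linarith)
    have h1 : 0 ≤ 2*lam*Complex.normSq (v x) :=
      mul_nonneg (by linarith) (Complex.normSq_nonneg _)
    have h3 : 0 ≤ lam/2 * (-vhat' x) * ((vhat x)⁻¹)^2 * Complex.normSq (v x) := by
      apply mul_nonneg _ (Complex.normSq_nonneg _)
      apply mul_nonneg (mul_nonneg (by linarith) (by linarith [hmono x])) (sq_nonneg _)
    have h4 : 0 ≤ Complex.normSq (v' x) * (vhat x)⁻¹ :=
      mul_nonneg (Complex.normSq_nonneg _) (inv_nonneg.mpr (le_of_lt (hpos x)))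
    have h6 : a * p'' (vhat x) * (-vhat' x)/2 * Complex.normSq (v x) ≤ 0 := by linarith
    have h7 : a * p'' (vhat x) * (-vhat' x)/2 * Complex.normSq (v x) = 0 :=
      le_antisymm h6 (mul_nonneg (le_of_lt hc2) (Complex.normSq_nonneg _))
    have h8 : Complex.normSq (v x) = 0 :=
      (mul_eq_zero.mp h7).resolve_left (ne_of_gt hc2)
    exact Complex.normSq_eq_zero.mp h8
  -- v' = 0, hence u' = 0, hence u constant, hence u = 0
  have hvfun : v = fun _ => (0:ℂ) := funext hvz
  have hv'z : ∀ x, v' x = 0 := fun x =>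
    HasDerivAt.unique (hvd1 x) (hvfun ▸ hasDerivAt_const x (0:ℂ))
  have hu'z : ∀ x, u' x = 0 := by
    intro x
    have := heq1 x
    rw [hvz x, hv'z x] at this
    simpa using this
  have hudiff : Differentiable ℝ u := fun x => (hud1 x).differentiableAt
  have huderiv : ∀ x, deriv u x = 0 := fun x => by rw [(hud1 x).deriv]; exact hu'z x
  have hucon : ∀ x : ℝ, u x = u 0 := fun x => is_const_of_deriv_eq_zero hudiff huderiv x 0
  have huz : u 0 = 0 := by
    have h1 : Tendsto u atTop (𝓝 (u 0)) := by
      have : u = fun _ => u 0 := funext hucon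
      rw [this]
      exact tendsto_const_nhds
    exact tendsto_nhds_unique h1 hu_t.1
  exact ⟨fun x => (hucon x).trans huz, hvz⟩
end

section
/- Consider the adiabatic pressure law p(v) = v^(−γ) with γ ≥ 1, normalized so that v₋ = 1, with 0 < v₊ < 1, a = (1 − v₊)/(v₊^(−γ) − 1), and d > 0. Let v̂ be a monotone shock profile (so 0 < v̂ ≤ 1, v̂′ < 0, |v̂′| ≤ 1/4, and f(v̂) := −a p′(v̂) − v̂′/v̂² > 0), and set C = sup_x |f(v̂(x)) v̂(x)|. Then for every ε₁, ε₂, θ > 0, every λ ∈ ℂ with Re λ ≥ 0, and every solution (u, v) of the integrated eigenvalue system λv + v′ − u′ = 0, λu + u′ − f(v̂)v′ = u″/v̂ − d v‴ (decay class as below), the inequality (Re λ + |Im λ|)∫_ℝ v̂|u|² + (1 − ε₁ − ε₂)∫_ℝ |u′|² ≤ [1/(4ε₁) + C/(2θ)]∫_ℝ v̂|u|² + d²[1/4 + 1/(2ε₂)]∫_ℝ |v″|² + θ∫_ℝ f(v̂)|v′|² holds. -/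
open Filter Topology Set MeasureTheory

lemma hfe_mulL2 {g h : ℝ → ℂ} (hg : MemLp g 2 volume) (hh : MemLp h 2 volume) :
    Integrable (fun x => g x * h x) volume := by
  have := hh.smul hg (p := 2) (q := 2) (r := 1)
  exact memLp_one_iff_integrable.mp this

lemma hfe_mulL2r {g h : ℝ → ℝ} (hg : MemLp g 2 volume) (hh : MemLp h 2 volume) :
    Integrable (fun x => g x * h x) volume := by
  have := hh.smul hg (p := 2) (q := 2) (r := 1)
  exact memLp_one_iff_integrable.mp this

lemma hfe_conjL2 {h : ℝ → ℂ} (hh : MemLp h 2 volume) :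
    MemLp (fun x => (starRingEnd ℂ) (h x)) 2 volume := by
  refine hh.of_le ?_ (Filter.Eventually.of_forall fun x => by simp)
  exact (RCLike.continuous_conj.comp_aestronglyMeasurable hh.1)

lemma hfe_ftc0 {F F' : ℝ → ℂ} (hd : ∀ x, HasDerivAt F (F' x) x) (hi : Integrable F' volume)
    (hp : Tendsto F atTop (𝓝 (0:ℂ))) (hm : Tendsto F atBot (𝓝 (0:ℂ))) :
    ∫ x, F' x = 0 := by
  have h1 := integral_Iic_of_hasDerivAt_of_tendsto' (a := 0) (fun x _ => hd x)
    hi.integrableOn hm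
  have h2 := integral_Ioi_of_hasDerivAt_of_tendsto' (a := 0) (fun x _ => hd x)
    hi.integrableOn hp
  have h3 := intervalIntegral.integral_Iic_add_Ioi (b := (0:ℝ)) (μ := volume) (f := F')
    hi.integrableOn hi.integrableOn
  rw [← h3, h1, h2]; ring

lemma hfe_re_add_im (z : ℂ) (σ : ℝ) (hσ : |σ| ≤ 1) :
    z.re + σ * z.im ≤ Real.sqrt 2 * ‖z‖ := by
  have hn : ‖z‖ ^ 2 = z.re ^ 2 + z.im ^ 2 := by
    rw [Complex.sq_norm, Complex.normSq_apply]; ring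
  have h1 : z.re + σ * z.im ≤ |z.re| + |z.im| := by
    have h2 := abs_le.mp hσ
    nlinarith [le_abs_self z.re, le_abs_self z.im, neg_abs_le z.im, abs_nonneg z.im]
  refine h1.trans ?_
  have h2 : (|z.re| + |z.im|) ^ 2 ≤ (Real.sqrt 2 * ‖z‖) ^ 2 := by
    rw [mul_pow, Real.sq_sqrt (by norm_num : (0:ℝ) ≤ 2), hn]
    nlinarith [sq_nonneg (|z.re| - |z.im|), _root_.sq_abs z.re, _root_.sq_abs z.im]
  calc |z.re| + |z.im| = Real.sqrt ((|z.re| + |z.im|) ^ 2) :=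
        (Real.sqrt_sq (by positivity)).symm
    _ ≤ Real.sqrt ((Real.sqrt 2 * ‖z‖) ^ 2) := Real.sqrt_le_sqrt h2
    _ = Real.sqrt 2 * ‖z‖ := Real.sqrt_sq (by positivity)

lemma hfe_tendsto_bdd_mul_zero {l : Filter ℝ} {w : ℝ → ℝ} {g : ℝ → ℂ} (M : ℝ)
    (hw : ∀ x, |w x| ≤ M) (hg : Tendsto g l (𝓝 0)) :
    Tendsto (fun x => ((w x : ℝ) : ℂ) * g x) l (𝓝 0) := by
  apply squeeze_zero_norm (a := fun x => M * ‖g x‖)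
  · intro x
    rw [norm_mul, Complex.norm_real]
    exact mul_le_mul_of_nonneg_right (hw x) (norm_nonneg _)
  · simpa using (hg.norm.const_mul M)

lemma hfe_young1 {ε w a b : ℝ} (hε : 0 < ε) (hw : 0 ≤ w) (hw1 : w ≤ 1)
    (ha : 0 ≤ a) (hb : 0 ≤ b) : w * (a * b) ≤ ε * a ^ 2 + 1 / (4 * ε) * (w * b ^ 2) := by
  rw [← sub_nonneg]
  have hexpr : ε * a ^ 2 + 1 / (4 * ε) * (w * b ^ 2) - w * (a * b)
      = (4 * ε ^ 2 * a ^ 2 + w * b ^ 2 - 4 * ε * (w * (a * b))) / (4 * ε) := by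
    field_simp
  rw [hexpr]
  refine div_nonneg ?_ (by positivity)
  nlinarith [sq_nonneg (2 * ε * a - w * b), mul_nonneg (mul_nonneg hw (sub_nonneg.mpr hw1)) (sq_nonneg b)]

lemma hfe_young2 {s θ fv w a b Cv : ℝ} (hs : s ^ 2 = 2) (hθ : 0 < θ) (hf : 0 ≤ fv)
    (hw : 0 ≤ w) (hfw : fv * w ≤ Cv) :
    s * (fv * w * (a * b)) ≤ θ * (fv * a ^ 2) + Cv / (2 * θ) * (w * b ^ 2) := by
  rw [← sub_nonneg]
  have hexpr : θ * (fv * a ^ 2) + Cv / (2 * θ) * (w * b ^ 2) - s * (fv * w * (a * b))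
      = (2 * θ ^ 2 * (fv * a ^ 2) - 2 * θ * (s * (fv * w * (a * b))) + Cv * (w * b ^ 2)) / (2 * θ) := by
    field_simp; ring
  rw [hexpr]
  refine div_nonneg ?_ (by positivity)
  have hid : 2 * θ ^ 2 * (fv * a ^ 2) - 2 * θ * (s * (fv * w * (a * b))) + Cv * (w * b ^ 2)
      = fv * (s * θ * a - w * b) ^ 2 + (Cv - fv * w) * (w * b ^ 2)
        + (2 - s ^ 2) * (fv * θ ^ 2 * a ^ 2) := by ring
  rw [hid, hs]
  nlinarith [mul_nonneg hf (sq_nonneg (s * θ * a - w * b)),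
    mul_nonneg (sub_nonneg.mpr hfw) (mul_nonneg hw (sq_nonneg b))]

lemma hfe_young3a {s d w a b : ℝ} (hs : s ^ 2 = 2) (hd : 0 ≤ d) (hw : 0 ≤ w)
    (hw4 : w ≤ 1 / 4) :
    s * d * (w * (a * b)) ≤ 1 / 2 * (w * b ^ 2) + d ^ 2 * (1 / 4) * a ^ 2 := by
  rw [← sub_nonneg]
  have hid : 1 / 2 * (w * b ^ 2) + d ^ 2 * (1 / 4) * a ^ 2 - s * d * (w * (a * b))
      = w / 2 * (b - s * d * a) ^ 2 + (1 / 4 - w) * (d ^ 2 * a ^ 2)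
        + (2 - s ^ 2) * (w * d ^ 2 * a ^ 2 / 2) := by ring
  rw [hid, hs]
  nlinarith [mul_nonneg hw (sq_nonneg (b - s * d * a)),
    mul_nonneg (sub_nonneg.mpr hw4) (mul_nonneg (sq_nonneg d) (sq_nonneg a))]

lemma hfe_young3b {s d ε w a c : ℝ} (hs : s ^ 2 = 2) (hd : 0 ≤ d) (hε : 0 < ε)
    (hw : 0 ≤ w) (hw1 : w ≤ 1) :
    s * d * (w * (a * c)) ≤ ε * c ^ 2 + d ^ 2 / (2 * ε) * a ^ 2 := by
  rw [← sub_nonneg]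
  have hexpr : ε * c ^ 2 + d ^ 2 / (2 * ε) * a ^ 2 - s * d * (w * (a * c))
      = (2 * ε ^ 2 * c ^ 2 + d ^ 2 * a ^ 2 - 2 * ε * (s * d * (w * (a * c)))) / (2 * ε) := by
    field_simp
  rw [hexpr]
  refine div_nonneg ?_ (by positivity)
  have hid : 2 * ε ^ 2 * c ^ 2 + d ^ 2 * a ^ 2 - 2 * ε * (s * d * (w * (a * c)))
      = 1 / 2 * (2 * ε * c - s * d * (w * a)) ^ 2 + d ^ 2 * a ^ 2 * (1 - w ^ 2)
        + (2 - s ^ 2) * (d ^ 2 * w ^ 2 * a ^ 2 / 2) := by ring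
  rw [hid, hs]
  nlinarith [sq_nonneg (2 * ε * c - s * d * (w * a)),
    mul_nonneg (mul_nonneg (sq_nonneg d) (sq_nonneg a))
      (sub_nonneg.mpr (mul_le_one₀ hw1 hw hw1))]
/-- First high-frequency estimate for the adiabatic law
`p(v) = v^(−γ)` normalized so `v₋ = 1`: for a monotone shock profile,
`Re λ ≥ 0`, and any solution of the integrated eigenvalue system,
`(Re λ + |Im λ|) ∫ vhat |u|² + (1 − ε₁ − ε₂) ∫ |u'|²
  ≤ [1/(4ε₁) + C/(2θ)] ∫ vhat |u|² + d² [1/4 + 1/(2ε₂)] ∫ |v''|² + θ ∫ f(vhat)|v'|²`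
for all `ε₁, ε₂, θ > 0`, where `C = sup |f(vhat) vhat|`. -/
theorem high_frequency_estimate_one
    (γ : ℝ) (hγ : 1 ≤ γ)
    (vp a d : ℝ) (hvp : 0 < vp) (hvp1 : vp < 1) (hd : 0 < d)
    (ha : a = (1 - vp) / (vp ^ (-γ) - 1))
    (vhat vhat' vhat'' : ℝ → ℝ)
    (hpos : ∀ x, 0 < vhat x) (hle1 : ∀ x, vhat x ≤ 1)
    (hder1 : ∀ x, HasDerivAt vhat (vhat' x) x)
    (hder2 : ∀ x, HasDerivAt vhat' (vhat'' x) x)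
    (hprof : ∀ x, vhat x - 1 + a * ((vhat x) ^ (-γ) - 1) = vhat' x / vhat x - d * vhat'' x)
    (hlim_m : Tendsto vhat atBot (𝓝 1))
    (hlim_p : Tendsto vhat atTop (𝓝 vp))
    (hlimd_m : Tendsto vhat' atBot (𝓝 0))
    (hlimd_p : Tendsto vhat' atTop (𝓝 0))
    (hmono : ∀ x, vhat' x < 0)
    (hbd : ∀ x, |vhat' x| ≤ 1 / 4)
    (f : ℝ → ℝ)
    (hf : ∀ x, f x = a * γ * (vhat x) ^ (-γ - 1) - vhat' x / (vhat x) ^ 2)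
    (hfpos : ∀ x, 0 < f x)
    (C : ℝ) (hC : IsLUB (Set.range fun x => |f x * vhat x|) C)
    (lam : ℂ) (hlam : 0 ≤ lam.re)
    (u u' u'' v v' v'' v''' : ℝ → ℂ)
    (hud1 : ∀ x, HasDerivAt u (u' x) x)
    (hud2 : ∀ x, HasDerivAt u' (u'' x) x)
    (hvd1 : ∀ x, HasDerivAt v (v' x) x)
    (hvd2 : ∀ x, HasDerivAt v' (v'' x) x)
    (hvd3 : ∀ x, HasDerivAt v'' (v''' x) x)
    (hL2 : ∀ g ∈ ([u, u', u'', v, v', v'', v'''] : List (ℝ → ℂ)),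
      MemLp g 2 volume)
    (hdecay : ∀ g ∈ ([u, u', u'', v, v', v'', v'''] : List (ℝ → ℂ)),
      Tendsto g atTop (𝓝 0) ∧ Tendsto g atBot (𝓝 0))
    (heq1 : ∀ x, lam * v x + v' x - u' x = 0)
    (heq2 : ∀ x, lam * u x + u' x - ((f x : ℝ) : ℂ) * v' x
      = u'' x / ((vhat x : ℝ) : ℂ) - (d : ℂ) * v''' x) :
    ∀ ε₁ ε₂ θ : ℝ, 0 < ε₁ → 0 < ε₂ → 0 < θ →
      (lam.re + |lam.im|) * (∫ x, vhat x * ‖u x‖ ^ 2)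
          + (1 - ε₁ - ε₂) * (∫ x, ‖u' x‖ ^ 2)
        ≤ (1 / (4 * ε₁) + C / (2 * θ)) * (∫ x, vhat x * ‖u x‖ ^ 2)
          + d ^ 2 * (1 / 4 + 1 / (2 * ε₂)) * (∫ x, ‖v'' x‖ ^ 2)
          + θ * (∫ x, f x * ‖v' x‖ ^ 2) := by
  intro ε₁ ε₂ θ hε₁ hε₂ hθ
  -- notation and basic constants
  have hs2 : Real.sqrt 2 ^ 2 = 2 := Real.sq_sqrt (by norm_num)
  have hs0 : 0 < Real.sqrt 2 := Real.sqrt_pos.mpr (by norm_num)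
  -- MemLp facts
  have mu : MemLp u 2 volume := hL2 u (by simp)
  have mu' : MemLp u' 2 volume := hL2 u' (by simp)
  have mu'' : MemLp u'' 2 volume := hL2 u'' (by simp)
  have mv' : MemLp v' 2 volume := hL2 v' (by simp)
  have mv'' : MemLp v'' 2 volume := hL2 v'' (by simp)
  have mv''' : MemLp v''' 2 volume := hL2 v''' (by simp)
  obtain ⟨uT, uB⟩ := hdecay u (by simp)
  obtain ⟨u'T, u'B⟩ := hdecay u' (by simp)
  obtain ⟨v''T, v''B⟩ := hdecay v'' (by simp)
  -- continuity
  have cu : Continuous u := continuous_iff_continuousAt.mpr fun x => (hud1 x).continuousAt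
  have cu' : Continuous u' := continuous_iff_continuousAt.mpr fun x => (hud2 x).continuousAt
  have cv' : Continuous v' := continuous_iff_continuousAt.mpr fun x => (hvd2 x).continuousAt
  have cv'' : Continuous v'' := continuous_iff_continuousAt.mpr fun x => (hvd3 x).continuousAt
  have cvh : Continuous vhat := continuous_iff_continuousAt.mpr fun x => (hder1 x).continuousAt
  have cvh' : Continuous vhat' := continuous_iff_continuousAt.mpr fun x => (hder2 x).continuousAt
  have cf : Continuous f := by
    have hfeq : f = fun x => a * γ * (vhat x) ^ (-γ - 1) - vhat' x / (vhat x) ^ 2 := funext hf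
    rw [hfeq]
    refine Continuous.sub ?_ ?_
    · exact continuous_const.mul (cvh.rpow_const fun x => Or.inl (ne_of_gt (hpos x)))
    · exact cvh'.div (cvh.pow 2) fun x => by have := hpos x; positivity
  -- bounds
  have hvlb : ∀ x, vp ≤ vhat x := by
    intro x
    have hanti : Antitone vhat := by
      refine antitone_of_deriv_nonpos (fun y => (hder1 y).differentiableAt) fun y => ?_
      rw [(hder1 y).deriv]; exact (hmono y).le
    exact le_of_tendsto hlim_p (Filter.eventually_atTop.mpr ⟨x, fun y hy => hanti hy⟩)
  have hfvC : ∀ x, f x * vhat x ≤ C := fun x => le_trans (le_abs_self _) (hC.1 ⟨x, rfl⟩)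
  have hCabs : ∀ x, |f x * vhat x| ≤ C := fun x => hC.1 ⟨x, rfl⟩
  have hC0 : 0 ≤ C := le_trans (abs_nonneg _) (hC.1 ⟨0, rfl⟩)
  have hfub : ∀ x, f x ≤ C / vp := by
    intro x
    rw [le_div_iff₀ hvp]
    calc f x * vp ≤ f x * vhat x := mul_le_mul_of_nonneg_left (hvlb x) (hfpos x).le
      _ ≤ C := hfvC x
  have hfabs : ∀ x, |f x| ≤ C / vp := fun x => by
    rw [abs_of_pos (hfpos x)]; exact hfub x
  -- complex product integrability
  have mcu : MemLp (fun x => (starRingEnd ℂ) (u x)) 2 volume := hfe_conjL2 mu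
  have mcu' : MemLp (fun x => (starRingEnd ℂ) (u' x)) 2 volume := hfe_conjL2 mu'
  have iuu : Integrable (fun x => u x * (starRingEnd ℂ) (u x)) volume := hfe_mulL2 mu mcu
  have iu'u : Integrable (fun x => u' x * (starRingEnd ℂ) (u x)) volume := hfe_mulL2 mu' mcu
  have iu''u : Integrable (fun x => u'' x * (starRingEnd ℂ) (u x)) volume := hfe_mulL2 mu'' mcu
  have iu'u' : Integrable (fun x => u' x * (starRingEnd ℂ) (u' x)) volume := hfe_mulL2 mu' mcu'
  have iuu' : Integrable (fun x => u x * (starRingEnd ℂ) (u' x)) volume := hfe_mulL2 mu mcu'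
  have iv'u : Integrable (fun x => v' x * (starRingEnd ℂ) (u x)) volume := hfe_mulL2 mv' mcu
  have iv''u : Integrable (fun x => v'' x * (starRingEnd ℂ) (u x)) volume := hfe_mulL2 mv'' mcu
  have iv''u' : Integrable (fun x => v'' x * (starRingEnd ℂ) (u' x)) volume := hfe_mulL2 mv'' mcu'
  have iv'''u : Integrable (fun x => v''' x * (starRingEnd ℂ) (u x)) volume := hfe_mulL2 mv''' mcu
  have mw : AEStronglyMeasurable (fun x => ((vhat x : ℝ) : ℂ)) volume :=
    (Complex.continuous_ofReal.comp cvh).aestronglyMeasurable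
  have mw' : AEStronglyMeasurable (fun x => ((vhat' x : ℝ) : ℂ)) volume :=
    (Complex.continuous_ofReal.comp cvh').aestronglyMeasurable
  have mfv : AEStronglyMeasurable (fun x => ((f x * vhat x : ℝ) : ℂ)) volume :=
    (Complex.continuous_ofReal.comp (cf.mul cvh)).aestronglyMeasurable
  have bw : ∃ M, ∀ x, ‖((vhat x : ℝ) : ℂ)‖ ≤ M :=
    ⟨1, fun x => by rw [Complex.norm_real, Real.norm_eq_abs, abs_of_pos (hpos x)]; exact hle1 x⟩
  have bw' : ∃ M, ∀ x, ‖((vhat' x : ℝ) : ℂ)‖ ≤ M :=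
    ⟨1/4, fun x => by rw [Complex.norm_real, Real.norm_eq_abs]; exact hbd x⟩
  have bfv : ∃ M, ∀ x, ‖((f x * vhat x : ℝ) : ℂ)‖ ≤ M :=
    ⟨C, fun x => by rw [Complex.norm_real, Real.norm_eq_abs]; exact hCabs x⟩
  have c1 : Integrable (fun x => ((vhat x : ℝ) : ℂ) * (u x * (starRingEnd ℂ) (u x))) volume :=
    iuu.bdd_mul mw (ae_of_all _ bw.choose_spec)
  have c2 : Integrable (fun x => ((vhat x : ℝ) : ℂ) * (u' x * (starRingEnd ℂ) (u x))) volume :=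
    iu'u.bdd_mul mw (ae_of_all _ bw.choose_spec)
  have c2' : Integrable (fun x => ((vhat x : ℝ) : ℂ) * (u x * (starRingEnd ℂ) (u' x))) volume :=
    iuu'.bdd_mul mw (ae_of_all _ bw.choose_spec)
  have c3 : Integrable (fun x => ((f x * vhat x : ℝ) : ℂ) * (v' x * (starRingEnd ℂ) (u x))) volume :=
    iv'u.bdd_mul mfv (ae_of_all _ bfv.choose_spec)
  have c5 : Integrable (fun x => ((vhat x : ℝ) : ℂ) * (v''' x * (starRingEnd ℂ) (u x))) volume :=
    iv'''u.bdd_mul mw (ae_of_all _ bw.choose_spec)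
  have c6 : Integrable (fun x => ((vhat' x : ℝ) : ℂ) * (v'' x * (starRingEnd ℂ) (u x))) volume :=
    iv''u.bdd_mul mw' (ae_of_all _ bw'.choose_spec)
  have c7 : Integrable (fun x => ((vhat x : ℝ) : ℂ) * (v'' x * (starRingEnd ℂ) (u' x))) volume :=
    iv''u'.bdd_mul mw (ae_of_all _ bw.choose_spec)
  have c8 : Integrable (fun x => ((vhat' x : ℝ) : ℂ) * (u x * (starRingEnd ℂ) (u x))) volume :=
    iuu.bdd_mul mw' (ae_of_all _ bw'.choose_spec)
  -- derivative of coerced vhat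
  have hvhC : ∀ x, HasDerivAt (fun y => ((vhat y : ℝ) : ℂ)) ((vhat' x : ℝ) : ℂ) x :=
    fun x => (hder1 x).ofReal_comp
  have hcud : ∀ x, HasDerivAt (fun y => (starRingEnd ℂ) (u y)) ((starRingEnd ℂ) (u' x)) x := by
    intro x
    exact (hud1 x).star
  have hconjT : Tendsto (fun x => (starRingEnd ℂ) (u x)) atTop (𝓝 0) := by
    have := uT.star; rw [star_zero] at this; exact this
  have hconjB : Tendsto (fun x => (starRingEnd ℂ) (u x)) atBot (𝓝 0) := by
    have := uB.star; rw [star_zero] at this; exact this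
  -- FTC 1 : ∫ u'' conj u = - ∫ u' conj u'
  have S1 : (∫ x, u'' x * (starRingEnd ℂ) (u x))
      = - ∫ x, u' x * (starRingEnd ℂ) (u' x) := by
    have hD : ∀ x, HasDerivAt (fun y => u' y * (starRingEnd ℂ) (u y))
        (u'' x * (starRingEnd ℂ) (u x) + u' x * (starRingEnd ℂ) (u' x)) x :=
      fun x => (hud2 x).mul (hcud x)
    have hT : Tendsto (fun x => u' x * (starRingEnd ℂ) (u x)) atTop (𝓝 0) := by
      simpa using u'T.mul hconjT
    have hB : Tendsto (fun x => u' x * (starRingEnd ℂ) (u x)) atBot (𝓝 0) := by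
      simpa using u'B.mul hconjB
    have h0 := hfe_ftc0 hD (iu''u.add iu'u') hT hB
    rw [integral_add iu''u iu'u'] at h0
    exact eq_neg_of_add_eq_zero_left h0
  -- FTC 2 : ∫ vhat v''' conj u = - (∫ vhat' v'' conj u + ∫ vhat v'' conj u')
  have S2 : (∫ x, ((vhat x : ℝ) : ℂ) * (v''' x * (starRingEnd ℂ) (u x)))
      = -((∫ x, ((vhat' x : ℝ) : ℂ) * (v'' x * (starRingEnd ℂ) (u x)))
          + ∫ x, ((vhat x : ℝ) : ℂ) * (v'' x * (starRingEnd ℂ) (u' x))) := by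
    have hD : ∀ x, HasDerivAt (fun y => ((vhat y : ℝ) : ℂ) * (v'' y * (starRingEnd ℂ) (u y)))
        (((vhat' x : ℝ) : ℂ) * (v'' x * (starRingEnd ℂ) (u x))
          + (((vhat x : ℝ) : ℂ) * (v''' x * (starRingEnd ℂ) (u x))
            + ((vhat x : ℝ) : ℂ) * (v'' x * (starRingEnd ℂ) (u' x)))) x := by
      intro x
      have h := (hvhC x).mul ((hvd3 x).mul (hcud x))
      refine h.congr_deriv ?_
      simp only [Pi.mul_apply]; ring
    have hcv : Tendsto (fun x => v'' x * (starRingEnd ℂ) (u x)) atTop (𝓝 0) := by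
      simpa using v''T.mul hconjT
    have hcvB : Tendsto (fun x => v'' x * (starRingEnd ℂ) (u x)) atBot (𝓝 0) := by
      simpa using v''B.mul hconjB
    have hT := hfe_tendsto_bdd_mul_zero (w := vhat) 1
      (fun x => by rw [abs_of_pos (hpos x)]; exact hle1 x) hcv
    have hB := hfe_tendsto_bdd_mul_zero (w := vhat) 1
      (fun x => by rw [abs_of_pos (hpos x)]; exact hle1 x) hcvB
    have c57 : Integrable (fun x => ((vhat x : ℝ) : ℂ) * (v''' x * (starRingEnd ℂ) (u x))
        + ((vhat x : ℝ) : ℂ) * (v'' x * (starRingEnd ℂ) (u' x))) volume := c5.add c7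
    have h0 := hfe_ftc0 hD (c6.add c57) hT hB
    rw [integral_add c6 c57, integral_add c5 c7] at h0
    have := eq_neg_of_add_eq_zero_left h0
    linear_combination h0
  -- FTC 3 : ∫ vhat' u conj u + ∫ vhat u' conj u + ∫ vhat u conj u' = 0
  have S3 : (∫ x, ((vhat' x : ℝ) : ℂ) * (u x * (starRingEnd ℂ) (u x)))
      + ((∫ x, ((vhat x : ℝ) : ℂ) * (u' x * (starRingEnd ℂ) (u x)))
        + ∫ x, ((vhat x : ℝ) : ℂ) * (u x * (starRingEnd ℂ) (u' x))) = 0 := by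
    have hD : ∀ x, HasDerivAt (fun y => ((vhat y : ℝ) : ℂ) * (u y * (starRingEnd ℂ) (u y)))
        (((vhat' x : ℝ) : ℂ) * (u x * (starRingEnd ℂ) (u x))
          + (((vhat x : ℝ) : ℂ) * (u' x * (starRingEnd ℂ) (u x))
            + ((vhat x : ℝ) : ℂ) * (u x * (starRingEnd ℂ) (u' x)))) x := by
      intro x
      have h := (hvhC x).mul ((hud1 x).mul (hcud x))
      refine h.congr_deriv ?_
      simp only [Pi.mul_apply]; ring
    have hcv : Tendsto (fun x => u x * (starRingEnd ℂ) (u x)) atTop (𝓝 0) := by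
      simpa using uT.mul hconjT
    have hcvB : Tendsto (fun x => u x * (starRingEnd ℂ) (u x)) atBot (𝓝 0) := by
      simpa using uB.mul hconjB
    have hT := hfe_tendsto_bdd_mul_zero (w := vhat) 1
      (fun x => by rw [abs_of_pos (hpos x)]; exact hle1 x) hcv
    have hB := hfe_tendsto_bdd_mul_zero (w := vhat) 1
      (fun x => by rw [abs_of_pos (hpos x)]; exact hle1 x) hcvB
    have c22 : Integrable (fun x => ((vhat x : ℝ) : ℂ) * (u' x * (starRingEnd ℂ) (u x))
        + ((vhat x : ℝ) : ℂ) * (u x * (starRingEnd ℂ) (u' x))) volume := c2.add c2'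
    have h0 := hfe_ftc0 hD (c8.add c22) hT hB
    rw [integral_add c8 c22, integral_add c2 c2'] at h0
    exact h0
  -- name the real integrals
  set A := ∫ x, vhat x * ‖u x‖ ^ 2 with hA
  set U := ∫ x, ‖u' x‖ ^ 2 with hU
  set W := ∫ x, ‖v'' x‖ ^ 2 with hW
  set Fi := ∫ x, f x * ‖v' x‖ ^ 2 with hFi
  set Bn := ∫ x, -vhat' x * ‖u x‖ ^ 2 with hBn
  set P := ∫ x, ((vhat x : ℝ) : ℂ) * (u' x * (starRingEnd ℂ) (u x)) with hP
  set Q := ∫ x, ((f x * vhat x : ℝ) : ℂ) * (v' x * (starRingEnd ℂ) (u x)) with hQ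
  set R1 := ∫ x, ((vhat' x : ℝ) : ℂ) * (v'' x * (starRingEnd ℂ) (u x)) with hR1
  set R2 := ∫ x, ((vhat x : ℝ) : ℂ) * (v'' x * (starRingEnd ℂ) (u' x)) with hR2
  -- coercion identities
  have hIA : (∫ x, ((vhat x : ℝ) : ℂ) * (u x * (starRingEnd ℂ) (u x))) = ((A : ℝ) : ℂ) := by
    have hpt : (fun x => ((vhat x : ℝ) : ℂ) * (u x * (starRingEnd ℂ) (u x)))
        = fun x => ((vhat x * ‖u x‖ ^ 2 : ℝ) : ℂ) := by
      funext x
      rw [Complex.mul_conj, Complex.normSq_eq_norm_sq,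
        Complex.ofReal_mul]
    rw [hpt, hA]
    exact integral_ofReal
  have hUc : (∫ x, u' x * (starRingEnd ℂ) (u' x)) = ((U : ℝ) : ℂ) := by
    have hpt : (fun x => u' x * (starRingEnd ℂ) (u' x))
        = fun x => ((‖u' x‖ ^ 2 : ℝ) : ℂ) := by
      funext x
      rw [Complex.mul_conj, Complex.normSq_eq_norm_sq]
    rw [hpt, hU]
    exact integral_ofReal
  have hc8v : (∫ x, ((vhat' x : ℝ) : ℂ) * (u x * (starRingEnd ℂ) (u x))) = ((-Bn : ℝ) : ℂ) := by
    have h1 : (∫ x, ((vhat' x : ℝ) : ℂ) * (u x * (starRingEnd ℂ) (u x)))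
        = ((∫ x, vhat' x * ‖u x‖ ^ 2 : ℝ) : ℂ) := by
      have hpt : (fun x => ((vhat' x : ℝ) : ℂ) * (u x * (starRingEnd ℂ) (u x)))
          = fun x => ((vhat' x * ‖u x‖ ^ 2 : ℝ) : ℂ) := by
        funext x
        rw [Complex.mul_conj, Complex.normSq_eq_norm_sq,
          Complex.ofReal_mul]
      rw [hpt]
      exact integral_ofReal
    have h2 : (∫ x, vhat' x * ‖u x‖ ^ 2) = -Bn := by
      rw [hBn]
      rw [show (fun x => -vhat' x * ‖u x‖ ^ 2) = fun x => -(vhat' x * ‖u x‖ ^ 2) from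
        funext fun x => by ring]
      rw [integral_neg, neg_neg]
    rw [h1, h2]
  have hP2 : (∫ x, ((vhat x : ℝ) : ℂ) * (u x * (starRingEnd ℂ) (u' x))) = (starRingEnd ℂ) P := by
    have hpt : (fun x => ((vhat x : ℝ) : ℂ) * (u x * (starRingEnd ℂ) (u' x)))
        = fun x => (starRingEnd ℂ) (((vhat x : ℝ) : ℂ) * (u' x * (starRingEnd ℂ) (u x))) := by
      funext x
      rw [map_mul, map_mul, Complex.conj_ofReal, Complex.conj_conj]
      ring
    rw [hpt, hP]
    exact integral_conj
  -- P.re = Bn / 2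
  have hPre : P.re = Bn / 2 := by
    rw [hc8v, hP2] at S3
    have hcc : P + (starRingEnd ℂ) P = ((2 * P.re : ℝ) : ℂ) := Complex.add_conj P
    rw [hcc] at S3
    have : (-Bn : ℝ) + 2 * P.re = 0 := by exact_mod_cast S3
    linarith
  -- main pointwise identity
  have key : ∀ x, lam * (((vhat x : ℝ) : ℂ) * (u x * (starRingEnd ℂ) (u x)))
      + ((vhat x : ℝ) : ℂ) * (u' x * (starRingEnd ℂ) (u x))
      - ((f x * vhat x : ℝ) : ℂ) * (v' x * (starRingEnd ℂ) (u x))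
      = u'' x * (starRingEnd ℂ) (u x)
        - (d : ℂ) * (((vhat x : ℝ) : ℂ) * (v''' x * (starRingEnd ℂ) (u x))) := by
    intro x
    have hx := heq2 x
    have hne : ((vhat x : ℝ) : ℂ) ≠ 0 := Complex.ofReal_ne_zero.mpr (ne_of_gt (hpos x))
    have h2 : u'' x / ((vhat x : ℝ) : ℂ) * ((vhat x : ℝ) : ℂ) = u'' x := div_mul_cancel₀ _ hne
    push_cast
    linear_combination (((vhat x : ℝ) : ℂ) * (starRingEnd ℂ) (u x)) * hx
      + (starRingEnd ℂ) (u x) * h2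
  -- integrate the identity
  have keyInt : lam * ((A : ℝ) : ℂ) + P - Q = -((U : ℝ) : ℂ) + (d : ℂ) * (R1 + R2) := by
    have hLR : (∫ x, (lam * (((vhat x : ℝ) : ℂ) * (u x * (starRingEnd ℂ) (u x)))
        + ((vhat x : ℝ) : ℂ) * (u' x * (starRingEnd ℂ) (u x))
        - ((f x * vhat x : ℝ) : ℂ) * (v' x * (starRingEnd ℂ) (u x))))
        = ∫ x, (u'' x * (starRingEnd ℂ) (u x)
          - (d : ℂ) * (((vhat x : ℝ) : ℂ) * (v''' x * (starRingEnd ℂ) (u x)))) := by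
      congr 1; funext x; exact key x
    have cL1 : Integrable (fun x => lam * (((vhat x : ℝ) : ℂ) * (u x * (starRingEnd ℂ) (u x))))
        volume := c1.const_mul lam
    have cL12 : Integrable (fun x => lam * (((vhat x : ℝ) : ℂ) * (u x * (starRingEnd ℂ) (u x)))
        + ((vhat x : ℝ) : ℂ) * (u' x * (starRingEnd ℂ) (u x))) volume := cL1.add c2
    have cR1 : Integrable (fun x => (d : ℂ)
        * (((vhat x : ℝ) : ℂ) * (v''' x * (starRingEnd ℂ) (u x)))) volume := c5.const_mul _
    rw [integral_sub cL12 c3, integral_add cL1 c2, integral_const_mul,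
      integral_sub iu''u cR1, integral_const_mul, hIA, S1, hUc, S2] at hLR
    rw [← hP, ← hQ] at hLR
    linear_combination hLR
  -- real and imaginary parts
  have hre := congrArg Complex.re keyInt
  have him := congrArg Complex.im keyInt
  simp only [Complex.add_re, Complex.sub_re, Complex.mul_re, Complex.ofReal_re,
    Complex.ofReal_im, Complex.neg_re, Complex.add_im, Complex.sub_im, Complex.mul_im,
    Complex.neg_im, mul_zero, zero_mul, sub_zero, add_zero, zero_add, zero_sub, neg_zero] at hre him
  -- the sign σ
  set σ : ℝ := if 0 ≤ lam.im then 1 else -1 with hσdef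
  have hσ1 : |σ| ≤ 1 := by rw [hσdef]; split_ifs <;> norm_num
  have hσim : σ * lam.im = |lam.im| := by
    rw [hσdef]; split_ifs with h
    · rw [_root_.abs_of_nonneg h]; ring
    · rw [_root_.abs_of_neg (lt_of_not_ge h)]; ring
  -- combined identity
  have Ecomb : (lam.re + |lam.im|) * A + U + Bn / 2
      = -(σ * P.im) + (Q.re + σ * Q.im)
        + (d * (R1.re + σ * R1.im) + d * (R2.re + σ * R2.im)) := by
    linear_combination hre + σ * him - A * hσim - hPre
  -- real integrability facts
  have iUi : Integrable (fun x => ‖u' x‖ ^ 2) volume := by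
    simpa [pow_two] using hfe_mulL2r mu'.norm mu'.norm
  have iWi : Integrable (fun x => ‖v'' x‖ ^ 2) volume := by
    simpa [pow_two] using hfe_mulL2r mv''.norm mv''.norm
  have iuu2 : Integrable (fun x => ‖u x‖ ^ 2) volume := by
    simpa [pow_two] using hfe_mulL2r mu.norm mu.norm
  have iv'2 : Integrable (fun x => ‖v' x‖ ^ 2) volume := by
    simpa [pow_two] using hfe_mulL2r mv'.norm mv'.norm
  have iAi : Integrable (fun x => vhat x * ‖u x‖ ^ 2) volume :=
    iuu2.bdd_mul (c := 1) cvh.aestronglyMeasurable (ae_of_all _ fun x => by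
      rw [Real.norm_eq_abs, abs_of_pos (hpos x)]; exact hle1 x)
  have iBni : Integrable (fun x => -vhat' x * ‖u x‖ ^ 2) volume :=
    iuu2.bdd_mul (c := 1/4) cvh'.neg.aestronglyMeasurable (ae_of_all _ fun x => by
      rw [Real.norm_eq_abs, abs_neg]; exact hbd x)
  have iFii : Integrable (fun x => f x * ‖v' x‖ ^ 2) volume :=
    iv'2.bdd_mul (c := C / vp) cf.aestronglyMeasurable (ae_of_all _ fun x => by
      rw [Real.norm_eq_abs]; exact hfabs x)
  have ru'u : Integrable (fun x => ‖u' x‖ * ‖u x‖) volume := hfe_mulL2r mu'.norm mu.norm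
  have rv'u : Integrable (fun x => ‖v' x‖ * ‖u x‖) volume := hfe_mulL2r mv'.norm mu.norm
  have rv''u : Integrable (fun x => ‖v'' x‖ * ‖u x‖) volume := hfe_mulL2r mv''.norm mu.norm
  have rv''u' : Integrable (fun x => ‖v'' x‖ * ‖u' x‖) volume := hfe_mulL2r mv''.norm mu'.norm
  have g1i : Integrable (fun x => vhat x * (‖u' x‖ * ‖u x‖)) volume :=
    ru'u.bdd_mul (c := 1) cvh.aestronglyMeasurable (ae_of_all _ fun x => by
      rw [Real.norm_eq_abs, abs_of_pos (hpos x)]; exact hle1 x)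
  have g2i : Integrable (fun x => f x * vhat x * (‖v' x‖ * ‖u x‖)) volume :=
    rv'u.bdd_mul (c := C) (cf.mul cvh).aestronglyMeasurable (ae_of_all _ fun x => by
      rw [Real.norm_eq_abs]; exact hCabs x)
  have g3ai : Integrable (fun x => -vhat' x * (‖v'' x‖ * ‖u x‖)) volume :=
    rv''u.bdd_mul (c := 1/4) cvh'.neg.aestronglyMeasurable (ae_of_all _ fun x => by
      rw [Real.norm_eq_abs, abs_neg]; exact hbd x)
  have g3bi : Integrable (fun x => vhat x * (‖v'' x‖ * ‖u' x‖)) volume :=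
    rv''u'.bdd_mul (c := 1) cvh.aestronglyMeasurable (ae_of_all _ fun x => by
      rw [Real.norm_eq_abs, abs_of_pos (hpos x)]; exact hle1 x)
  -- bound b1
  have hPnorm : ‖P‖ ≤ ∫ x, vhat x * (‖u' x‖ * ‖u x‖) := by
    rw [hP]
    refine (norm_integral_le_integral_norm _).trans (le_of_eq ?_)
    congr 1; funext x
    rw [norm_mul, norm_mul, Complex.norm_real, Real.norm_eq_abs, abs_of_pos (hpos x),
      RCLike.norm_conj]
  have b1 : -(σ * P.im) ≤ ε₁ * U + 1 / (4 * ε₁) * A := by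
    have h1 : -(σ * P.im) ≤ ‖P‖ := by
      have h2 : |σ * P.im| ≤ ‖P‖ := by
        rw [abs_mul]
        calc |σ| * |P.im| ≤ 1 * |P.im| := mul_le_mul_of_nonneg_right hσ1 (abs_nonneg _)
          _ = |P.im| := one_mul _
          _ ≤ ‖P‖ := Complex.abs_im_le_norm P
      linarith [neg_abs_le (σ * P.im)]
    refine h1.trans (hPnorm.trans ?_)
    have hmono2 : (∫ x, vhat x * (‖u' x‖ * ‖u x‖))
        ≤ ∫ x, (ε₁ * ‖u' x‖ ^ 2 + 1 / (4 * ε₁) * (vhat x * ‖u x‖ ^ 2)) := by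
      refine integral_mono g1i ((iUi.const_mul ε₁).add (iAi.const_mul (1 / (4 * ε₁)))) ?_
      intro x
      exact hfe_young1 hε₁ (hpos x).le (hle1 x) (norm_nonneg _) (norm_nonneg _)
    rw [integral_add (iUi.const_mul ε₁) (iAi.const_mul (1 / (4 * ε₁))), integral_const_mul,
      integral_const_mul, ← hU, ← hA] at hmono2
    exact hmono2
  -- bound b2
  have hQnorm : ‖Q‖ ≤ ∫ x, f x * vhat x * (‖v' x‖ * ‖u x‖) := by
    rw [hQ]
    refine (norm_integral_le_integral_norm _).trans (le_of_eq ?_)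
    congr 1; funext x
    rw [norm_mul, norm_mul, Complex.norm_real, Real.norm_eq_abs,
      abs_of_pos (mul_pos (hfpos x) (hpos x)), RCLike.norm_conj]
  have b2 : Q.re + σ * Q.im ≤ θ * Fi + C / (2 * θ) * A := by
    have h1 := hfe_re_add_im Q σ hσ1
    have h2 : Real.sqrt 2 * ‖Q‖ ≤ Real.sqrt 2 * ∫ x, f x * vhat x * (‖v' x‖ * ‖u x‖) :=
      mul_le_mul_of_nonneg_left hQnorm hs0.le
    have h3 : Real.sqrt 2 * (∫ x, f x * vhat x * (‖v' x‖ * ‖u x‖))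
        = ∫ x, Real.sqrt 2 * (f x * vhat x * (‖v' x‖ * ‖u x‖)) := (integral_const_mul _ _).symm
    have h4 : (∫ x, Real.sqrt 2 * (f x * vhat x * (‖v' x‖ * ‖u x‖)))
        ≤ ∫ x, (θ * (f x * ‖v' x‖ ^ 2) + C / (2 * θ) * (vhat x * ‖u x‖ ^ 2)) := by
      refine integral_mono (g2i.const_mul _)
        ((iFii.const_mul θ).add (iAi.const_mul (C / (2 * θ)))) ?_
      intro x
      exact hfe_young2 hs2 hθ (hfpos x).le (hpos x).le (hfvC x)
    rw [integral_add (iFii.const_mul θ) (iAi.const_mul (C / (2 * θ))), integral_const_mul,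
      integral_const_mul, integral_const_mul, ← hFi, ← hA] at h4
    linarith [h1, h2, h3, h4]
  -- bound b3a
  have hR1norm : ‖R1‖ ≤ ∫ x, -vhat' x * (‖v'' x‖ * ‖u x‖) := by
    rw [hR1]
    refine (norm_integral_le_integral_norm _).trans (le_of_eq ?_)
    congr 1; funext x
    rw [norm_mul, norm_mul, Complex.norm_real, Real.norm_eq_abs, abs_of_neg (hmono x),
      RCLike.norm_conj]
  have b3a : d * (R1.re + σ * R1.im) ≤ 1 / 2 * Bn + d ^ 2 * (1 / 4) * W := by
    have h1 := hfe_re_add_im R1 σ hσ1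
    have h1' : d * (R1.re + σ * R1.im) ≤ d * (Real.sqrt 2 * ‖R1‖) :=
      mul_le_mul_of_nonneg_left h1 hd.le
    have h2 : d * (Real.sqrt 2 * ‖R1‖)
        ≤ Real.sqrt 2 * d * ∫ x, -vhat' x * (‖v'' x‖ * ‖u x‖) := by
      rw [show d * (Real.sqrt 2 * ‖R1‖) = Real.sqrt 2 * d * ‖R1‖ from by ring]
      exact mul_le_mul_of_nonneg_left hR1norm (by positivity)
    have h3 : Real.sqrt 2 * d * (∫ x, -vhat' x * (‖v'' x‖ * ‖u x‖))
        = ∫ x, Real.sqrt 2 * d * (-vhat' x * (‖v'' x‖ * ‖u x‖)) := (integral_const_mul _ _).symm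
    have h4 : (∫ x, Real.sqrt 2 * d * (-vhat' x * (‖v'' x‖ * ‖u x‖)))
        ≤ ∫ x, (1 / 2 * (-vhat' x * ‖u x‖ ^ 2) + d ^ 2 * (1 / 4) * ‖v'' x‖ ^ 2) := by
      refine integral_mono (g3ai.const_mul _)
        ((iBni.const_mul (1/2)).add (iWi.const_mul _)) ?_
      intro x
      exact hfe_young3a hs2 hd.le (neg_nonneg.mpr (hmono x).le)
        (by linarith [(abs_le.mp (hbd x)).1])
    rw [integral_add (iBni.const_mul (1/2)) (iWi.const_mul _), integral_const_mul,
      integral_const_mul, integral_const_mul, ← hBn, ← hW] at h4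
    linarith [h1', h2, h3, h4]
  -- bound b3b
  have hR2norm : ‖R2‖ ≤ ∫ x, vhat x * (‖v'' x‖ * ‖u' x‖) := by
    rw [hR2]
    refine (norm_integral_le_integral_norm _).trans (le_of_eq ?_)
    congr 1; funext x
    rw [norm_mul, norm_mul, Complex.norm_real, Real.norm_eq_abs, abs_of_pos (hpos x),
      RCLike.norm_conj]
  have b3b : d * (R2.re + σ * R2.im) ≤ ε₂ * U + d ^ 2 / (2 * ε₂) * W := by
    have h1 := hfe_re_add_im R2 σ hσ1
    have h1' : d * (R2.re + σ * R2.im) ≤ d * (Real.sqrt 2 * ‖R2‖) :=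
      mul_le_mul_of_nonneg_left h1 hd.le
    have h2 : d * (Real.sqrt 2 * ‖R2‖)
        ≤ Real.sqrt 2 * d * ∫ x, vhat x * (‖v'' x‖ * ‖u' x‖) := by
      rw [show d * (Real.sqrt 2 * ‖R2‖) = Real.sqrt 2 * d * ‖R2‖ from by ring]
      exact mul_le_mul_of_nonneg_left hR2norm (by positivity)
    have h3 : Real.sqrt 2 * d * (∫ x, vhat x * (‖v'' x‖ * ‖u' x‖))
        = ∫ x, Real.sqrt 2 * d * (vhat x * (‖v'' x‖ * ‖u' x‖)) := (integral_const_mul _ _).symm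
    have h4 : (∫ x, Real.sqrt 2 * d * (vhat x * (‖v'' x‖ * ‖u' x‖)))
        ≤ ∫ x, (ε₂ * ‖u' x‖ ^ 2 + d ^ 2 / (2 * ε₂) * ‖v'' x‖ ^ 2) := by
      refine integral_mono (g3bi.const_mul _)
        ((iUi.const_mul ε₂).add (iWi.const_mul _)) ?_
      intro x
      exact hfe_young3b hs2 hd.le hε₂ (hpos x).le (hle1 x)
    rw [integral_add (iUi.const_mul ε₂) (iWi.const_mul _), integral_const_mul,
      integral_const_mul, integral_const_mul, ← hU, ← hW] at h4
    linarith [h1', h2, h3, h4]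
  have goalEq1 : (1 / (4 * ε₁) + C / (2 * θ)) * A = 1 / (4 * ε₁) * A + C / (2 * θ) * A := by
    ring
  have goalEq2 : d ^ 2 * (1 / 4 + 1 / (2 * ε₂)) * W
      = d ^ 2 * (1 / 4) * W + d ^ 2 / (2 * ε₂) * W := by ring
  have goalEq3 : (1 - ε₁ - ε₂) * U = U - ε₁ * U - ε₂ * U := by ring
  rw [goalEq1, goalEq2, goalEq3]
  linarith [Ecomb, b1, b2, b3a, b3b]
end

section
/- Let v̂ be a shock profile, λ ∈ ℂ, and let (u, v) be a solution of the integrated eigenvalue system λv + v′ − u′ = 0, λu + u′ − f(v̂)v′ = u″/v̂ − d v‴ (with f(v̂) = −a p′(v̂) − v̂′/v̂², u of class C², v of class C³, and u, u′, u″, v, v′, v″, v‴ square-integrable and tending to 0 at ±∞). Then Re[ λ ∫_ℝ u v̄′ dx + ∫_ℝ u′ v̄′ dx ] = ∫_ℝ |u′|² dx − 2 (Re λ)² ∫_ℝ |v|² dx. -/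
open Filter Topology Set MeasureTheory

private lemma memLp_conj {g : ℝ → ℂ} (hg : MemLp g 2 (volume : Measure ℝ)) :
    MemLp (fun x => (starRingEnd ℂ) (g x)) 2 (volume : Measure ℝ) := by
  refine ⟨continuous_star.comp_aestronglyMeasurable hg.1, ?_⟩
  have h : eLpNorm (fun x => (starRingEnd ℂ) (g x)) 2 (volume : Measure ℝ) = eLpNorm g 2 volume :=
    eLpNorm_congr_norm_ae (Filter.Eventually.of_forall fun x => by simp)
  rw [h]; exact hg.2

private lemma integrable_mul_conj {f g : ℝ → ℂ} (hf : MemLp f 2 (volume : Measure ℝ))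
    (hg : MemLp g 2 (volume : Measure ℝ)) :
    Integrable (fun x => f x * (starRingEnd ℂ) (g x)) (volume : Measure ℝ) := by
  have h : MemLp (f • fun x => (starRingEnd ℂ) (g x)) 1 (volume : Measure ℝ) :=
    (memLp_conj hg).smul hf
  simpa [Pi.smul_apply, smul_eq_mul, Pi.mul_def] using memLp_one_iff_integrable.mp h

private lemma integral_deriv_eq_zero {F F' : ℝ → ℂ}
    (hd : ∀ x, HasDerivAt F (F' x) x) (hi : Integrable F' (volume : Measure ℝ))
    (htop : Tendsto F atTop (𝓝 0)) (hbot : Tendsto F atBot (𝓝 0)) :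
    ∫ x, F' x = 0 := by
  simpa using MeasureTheory.integral_of_hasDerivAt_of_tendsto hd hi hbot htop


/-- For a shock profile of Slemrod's model, `λ ∈ ℂ`, and a
solution `(u, v)` of the integrated eigenvalue system, the identity
`Re[λ ∫ u conj(v') + ∫ u' conj(v')] = ∫ |u'|² − 2 (Re λ)² ∫ |v|²` holds. -/
theorem kawashima_key_identity
    (p p' p'' : ℝ → ℝ)
    (hp'd : ∀ s ∈ Ioi (0:ℝ), HasDerivAt p (p' s) s)
    (hp''d : ∀ s ∈ Ioi (0:ℝ), HasDerivAt p' (p'' s) s)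
    (hp''cont : ContinuousOn p'' (Ioi 0))
    (hp'neg : ∀ s ∈ Ioi (0:ℝ), p' s < 0)
    (hp''pos : ∀ s ∈ Ioi (0:ℝ), 0 < p'' s)
    (vp vm a d : ℝ)
    (hvp : 0 < vp) (hvlt : vp < vm) (hd : 0 ≤ d)
    (ha : a = -(vp - vm) / (p vp - p vm))
    (vhat vhat' vhat'' : ℝ → ℝ)
    (hpos : ∀ x, 0 < vhat x)
    (hder1 : ∀ x, HasDerivAt vhat (vhat' x) x)
    (hder2 : ∀ x, HasDerivAt vhat' (vhat'' x) x)
    (hprof : ∀ x, vhat x - vm + a * (p (vhat x) - p vm) = vhat' x / vhat x - d * vhat'' x)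
    (hlim_m : Tendsto vhat atBot (𝓝 vm))
    (hlim_p : Tendsto vhat atTop (𝓝 vp))
    (hlimd_m : Tendsto vhat' atBot (𝓝 0))
    (hlimd_p : Tendsto vhat' atTop (𝓝 0))
    (lam : ℂ)
    (u u' u'' v v' v'' v''' : ℝ → ℂ)
    (hud1 : ∀ x, HasDerivAt u (u' x) x)
    (hud2 : ∀ x, HasDerivAt u' (u'' x) x)
    (hvd1 : ∀ x, HasDerivAt v (v' x) x)
    (hvd2 : ∀ x, HasDerivAt v' (v'' x) x)
    (hvd3 : ∀ x, HasDerivAt v'' (v''' x) x)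
    (hL2 : ∀ g ∈ ([u, u', u'', v, v', v'', v'''] : List (ℝ → ℂ)),
      MemLp g 2 volume)
    (hdecay : ∀ g ∈ ([u, u', u'', v, v', v'', v'''] : List (ℝ → ℂ)),
      Tendsto g atTop (𝓝 0) ∧ Tendsto g atBot (𝓝 0))
    (heq1 : ∀ x, lam * v x + v' x - u' x = 0)
    (heq2 : ∀ x, lam * u x + u' x
        - ((-a * p' (vhat x) - vhat' x / (vhat x) ^ 2 : ℝ) : ℂ) * v' x
      = u'' x / ((vhat x : ℝ) : ℂ) - (d : ℂ) * v''' x) :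
    (lam * (∫ x, u x * (starRingEnd ℂ) (v' x))
        + (∫ x, u' x * (starRingEnd ℂ) (v' x))).re
      = (∫ x, ‖u' x‖ ^ 2) - 2 * lam.re ^ 2 * (∫ x, ‖v x‖ ^ 2) := by

  have hu2 : MemLp u 2 (volume : Measure ℝ) := hL2 u (List.Mem.head _)
  have hu'2 : MemLp u' 2 (volume : Measure ℝ) := hL2 u' (List.Mem.tail _ (List.Mem.head _))
  have hv2 : MemLp v 2 (volume : Measure ℝ) := hL2 v (List.Mem.tail _ (List.Mem.tail _ (List.Mem.tail _ (List.Mem.head _))))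
  have hv'2 : MemLp v' 2 (volume : Measure ℝ) := hL2 v' (List.Mem.tail _ (List.Mem.tail _ (List.Mem.tail _ (List.Mem.tail _ (List.Mem.head _)))))
  obtain ⟨hu_top, hu_bot⟩ := hdecay u (List.Mem.head _)
  obtain ⟨hv_top, hv_bot⟩ := hdecay v (List.Mem.tail _ (List.Mem.tail _ (List.Mem.tail _ (List.Mem.head _))))
  obtain ⟨hv'_top, hv'_bot⟩ := hdecay v' (List.Mem.tail _ (List.Mem.tail _ (List.Mem.tail _ (List.Mem.tail _ (List.Mem.head _)))))
  have iu'v : Integrable (fun x => u' x * (starRingEnd ℂ) (v x)) volume :=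
    integrable_mul_conj hu'2 hv2
  have iuv' : Integrable (fun x => u x * (starRingEnd ℂ) (v' x)) volume :=
    integrable_mul_conj hu2 hv'2
  have ivv : Integrable (fun x => v x * (starRingEnd ℂ) (v x)) volume :=
    integrable_mul_conj hv2 hv2
  have iv'v : Integrable (fun x => v' x * (starRingEnd ℂ) (v x)) volume :=
    integrable_mul_conj hv'2 hv2
  have ivv' : Integrable (fun x => v x * (starRingEnd ℂ) (v' x)) volume :=
    integrable_mul_conj hv2 hv'2
  have iu'u' : Integrable (fun x => u' x * (starRingEnd ℂ) (u' x)) volume :=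
    integrable_mul_conj hu'2 hu'2
  have hder_uv : ∀ x, HasDerivAt (fun y => u y * (starRingEnd ℂ) (v y))
      (u' x * (starRingEnd ℂ) (v x) + u x * (starRingEnd ℂ) (v' x)) x := by
    intro x
    exact (hud1 x).mul ((hvd1 x).star)
  have hder_vv : ∀ x, HasDerivAt (fun y => v y * (starRingEnd ℂ) (v y))
      (v' x * (starRingEnd ℂ) (v x) + v x * (starRingEnd ℂ) (v' x)) x := by
    intro x
    exact (hvd1 x).mul ((hvd1 x).star)
  have hconj_top : Tendsto (fun y => (starRingEnd ℂ) (v y)) atTop (𝓝 0) := by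
    have h : Tendsto (fun y => star (v y)) atTop (𝓝 (star (0:ℂ))) :=
      (continuous_star.tendsto _).comp hv_top
    rw [star_zero] at h
    exact h
  have hconj_bot : Tendsto (fun y => (starRingEnd ℂ) (v y)) atBot (𝓝 0) := by
    have h : Tendsto (fun y => star (v y)) atBot (𝓝 (star (0:ℂ))) :=
      (continuous_star.tendsto _).comp hv_bot
    rw [star_zero] at h
    exact h
  have h1 : (∫ x, u' x * (starRingEnd ℂ) (v x)) + (∫ x, u x * (starRingEnd ℂ) (v' x)) = 0 := by
    rw [← integral_add iu'v iuv']
    exact integral_deriv_eq_zero hder_uv (iu'v.add iuv')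
      (by simpa using hu_top.mul hconj_top) (by simpa using hu_bot.mul hconj_bot)
  have h2 : (∫ x, v' x * (starRingEnd ℂ) (v x)) + (∫ x, v x * (starRingEnd ℂ) (v' x)) = 0 := by
    rw [← integral_add iv'v ivv']
    exact integral_deriv_eq_zero hder_vv (iv'v.add ivv')
      (by simpa using hv_top.mul hconj_top) (by simpa using hv_bot.mul hconj_bot)
  have hconjint : (∫ x, v x * (starRingEnd ℂ) (v' x))
      = (starRingEnd ℂ) (∫ x, v' x * (starRingEnd ℂ) (v x)) := by
    rw [← integral_conj]
    congr 1; funext x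
    rw [map_mul, Complex.conj_conj, mul_comm]
  have hre0 : (∫ x, v' x * (starRingEnd ℂ) (v x)).re = 0 := by
    have h := h2
    rw [hconjint, Complex.add_conj] at h
    have h' : (2:ℝ) * (∫ x, v' x * (starRingEnd ℂ) (v x)).re = 0 := by exact_mod_cast h
    linarith
  have hu'eq : ∀ x, u' x = lam * v x + v' x := fun x => by linear_combination -(heq1 x)
  have hv'eq : ∀ x, v' x = u' x - lam * v x := fun x => by linear_combination heq1 x
  have hIu'v : (∫ x, u' x * (starRingEnd ℂ) (v x))
      = lam * (∫ x, v x * (starRingEnd ℂ) (v x)) + (∫ x, v' x * (starRingEnd ℂ) (v x)) := by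
    have he : (fun x => u' x * (starRingEnd ℂ) (v x))
        = fun x => lam • (v x * (starRingEnd ℂ) (v x)) + v' x * (starRingEnd ℂ) (v x) := by
      funext x; rw [hu'eq x]; simp only [smul_eq_mul]; ring
    have hint1 : Integrable (fun x => lam • (v x * (starRingEnd ℂ) (v x))) volume := ivv.smul lam
    rw [he, integral_add hint1 iv'v, integral_smul, smul_eq_mul]
  have hIuv' : (∫ x, u x * (starRingEnd ℂ) (v' x))
      = -(lam * (∫ x, v x * (starRingEnd ℂ) (v x)) + (∫ x, v' x * (starRingEnd ℂ) (v x))) := by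
    linear_combination h1 - hIu'v
  have hIu'v' : (∫ x, u' x * (starRingEnd ℂ) (v' x))
      = (∫ x, u' x * (starRingEnd ℂ) (u' x))
        - (starRingEnd ℂ) lam * (∫ x, u' x * (starRingEnd ℂ) (v x)) := by
    have he : (fun x => u' x * (starRingEnd ℂ) (v' x))
        = fun x => u' x * (starRingEnd ℂ) (u' x)
            + (-((starRingEnd ℂ) lam)) • (u' x * (starRingEnd ℂ) (v x)) := by
      funext x; rw [hv'eq x]; simp only [map_sub, map_mul, smul_eq_mul]; ring
    have hint2 : Integrable
        (fun x => (-((starRingEnd ℂ) lam)) • (u' x * (starRingEnd ℂ) (v x))) volume :=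
      iu'v.smul (-((starRingEnd ℂ) lam))
    rw [he, integral_add iu'u' hint2, integral_smul, smul_eq_mul]; ring
  have hU : (∫ x, u' x * (starRingEnd ℂ) (u' x)) = (((∫ x, ‖u' x‖ ^ 2) : ℝ) : ℂ) := by
    rw [show (fun x => u' x * (starRingEnd ℂ) (u' x)) = fun x => (((‖u' x‖ ^ 2 : ℝ)) : ℂ) from
      funext fun x => by
        rw [Complex.mul_conj]; norm_cast; rw [Complex.normSq_eq_norm_sq]]
    exact integral_ofReal
  have hB : (∫ x, v x * (starRingEnd ℂ) (v x)) = (((∫ x, ‖v x‖ ^ 2) : ℝ) : ℂ) := by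
    rw [show (fun x => v x * (starRingEnd ℂ) (v x)) = fun x => (((‖v x‖ ^ 2 : ℝ)) : ℂ) from
      funext fun x => by
        rw [Complex.mul_conj]; norm_cast; rw [Complex.normSq_eq_norm_sq]]
    exact integral_ofReal
  rw [hIuv', hIu'v', hIu'v, hU, hB]
  simp only [Complex.add_re, Complex.sub_re, Complex.neg_re, Complex.mul_re, Complex.mul_im,
    Complex.neg_im, Complex.add_im, Complex.sub_im, Complex.conj_re, Complex.conj_im,
    Complex.ofReal_re, Complex.ofReal_im, hre0]
  ring
end
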